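/- arXiv:1010.1358 — 3 statements merged into one kernel-verified Lean document; each statement's English description precedes it below -/
import Mathlib

section
/- (Wire-tap channel coding theorem with universal₂ hashing.) Let X, Y, Z be finite sets, let W^B: X → (probability distributions on Y) be the main channel and W^E: X → (probability distributions on Z) the wire-tapper's channel. Then for all positive integers L, M and every probability distribution p on X, there exists a code Φ = (M, {Q_1,…,Q_M}, {D_1,…,D_M}), where each Q_i is a probability distribution on X and D_1,…,D_M are pairwise disjoint subsets of Y, such that |Φ| = M, the average error probability satisfies ε_B(Φ) := (1/M) Σ_{i=1}^M Σ_{x∈X} Q_i(x) W^B_x(Y∖D_i) ≤ 2 min_{0≤t≤1} (ML)^t e^{φ(−t|W^B,p)}, and Eve's distinguishability satisfies d₁(Φ|E) := Σ_{i=1}^M Σ_{z∈Z} | (1/M) W^E_{Q_i}(z) − (1/M) W^E_Φ(z) | ≤ 6 min_{0≤t≤1/2} e^{φ(t|W^E,p)} / L^t. -/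
open Finset

namespace Stmt17Aux

set_option linter.unusedSectionVars false
variable {X : Type*} [Fintype X] {K : Type*} [Fintype K] [DecidableEq K]
variable (p : X → ℝ)

/-- total mass of the iid code distribution -/
lemma sum_wgt (hp1 : ∑ x, p x = 1) :
    ∑ c : K → X, ∏ k, p (c k) = 1 := by
  classical
  rw [← Fintype.piFinset_univ, ← Finset.prod_univ_sum (fun _ : K => (univ : Finset X))
    (fun _ x => p x)]
  simp [hp1]

/-- independence: expectation of `F(c j) * G c` factorizes when `G` ignores coordinate `j`. -/
lemma exp_indep (hp1 : ∑ x, p x = 1) (j : K) (F : X → ℝ) (G : (K → X) → ℝ)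
    (hG : ∀ c x, G (Function.update c j x) = G c) :
    ∑ c : K → X, (∏ k, p (c k)) * (F (c j) * G c)
      = (∑ x, p x * F x) * ∑ c : K → X, (∏ k, p (c k)) * G c := by
  classical
  have hsplit : ∀ (x : X) (h : {k : K // k ≠ j} → X),
      (Equiv.piSplitAt j (fun _ : K => X)).symm (x, h)
        = Function.update ((Equiv.piSplitAt j (fun _ : K => X)).symm (x, h)) j x := by
    intro x h
    funext k
    by_cases hk : k = j
    · subst hk; simp
    · simp [Function.update_of_ne hk]
  -- value of G depends only on the second component
  have hGval : ∀ (x x' : X) (h : {k : K // k ≠ j} → X),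
      G ((Equiv.piSplitAt j (fun _ : K => X)).symm (x, h))
        = G ((Equiv.piSplitAt j (fun _ : K => X)).symm (x', h)) := by
    intro x x' h
    have e1 := hsplit x h
    have e2 : (Equiv.piSplitAt j (fun _ : K => X)).symm (x, h)
        = Function.update ((Equiv.piSplitAt j (fun _ : K => X)).symm (x', h)) j x := by
      funext k
      by_cases hk : k = j
      · subst hk; simp
      · simp [Function.update_of_ne hk, hk]
    rw [e2, hG]
  have hX : Nonempty X := by
    by_contra hX
    rw [not_nonempty_iff] at hX
    simp [Finset.univ_eq_empty] at hp1
  obtain ⟨x0⟩ := hX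
  set e := Equiv.piSplitAt j (fun _ : K => X) with he
  have hsum : ∀ f : (K → X) → ℝ, ∑ c : K → X, f c = ∑ q : X × ({k : K // k ≠ j} → X), f (e.symm q) :=
    fun f => (Equiv.sum_comp e.symm f).symm
  have hcj : ∀ (x : X) (h : {k : K // k ≠ j} → X), (e.symm (x, h)) j = x := by
    intro x h; simp [he]
  have hprod : ∀ (x : X) (h : {k : K // k ≠ j} → X),
      (∏ k, p ((e.symm (x, h)) k)) = p x * ∏ kk : {k : K // k ≠ j}, p (h kk) := by
    intro x h
    have hps : ∏ kk : {k : K // k ≠ j}, p ((e.symm (x, h)) kk)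
        = ∏ k ∈ univ.erase j, p ((e.symm (x, h)) k) :=
      (Finset.prod_subtype (univ.erase j) (fun k => by simp)
        (fun k => p ((e.symm (x, h)) k))).symm
    rw [← Finset.mul_prod_erase univ _ (mem_univ j), hcj, ← hps]
    congr 1
    apply Finset.prod_congr rfl
    intro kk _
    congr 1
    simp [he, kk.2]
  have hGx : ∀ (x : X) (h : {k : K // k ≠ j} → X),
      G (e.symm (x, h)) = G (e.symm (x0, h)) := fun x h => hGval x x0 h
  rw [hsum fun c => (∏ k, p (c k)) * (F (c j) * G c),
      hsum fun c => (∏ k, p (c k)) * G c]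
  rw [Fintype.sum_prod_type, Fintype.sum_prod_type]
  have lhs_eq : ∀ (x : X), ∑ h : {k : K // k ≠ j} → X,
      (∏ k, p ((e.symm (x, h)) k)) * (F ((e.symm (x, h)) j) * G (e.symm (x, h)))
      = (p x * F x) * ∑ h : {k : K // k ≠ j} → X,
          (∏ kk : {k : K // k ≠ j}, p (h kk)) * G (e.symm (x0, h)) := by
    intro x
    rw [Finset.mul_sum]
    apply Finset.sum_congr rfl
    intro h _
    rw [hprod, hcj, hGx]
    ring
  have rhs_eq : ∀ (x : X), ∑ h : {k : K // k ≠ j} → X,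
      (∏ k, p ((e.symm (x, h)) k)) * G (e.symm (x, h))
      = p x * ∑ h : {k : K // k ≠ j} → X,
          (∏ kk : {k : K // k ≠ j}, p (h kk)) * G (e.symm (x0, h)) := by
    intro x
    rw [Finset.mul_sum]
    apply Finset.sum_congr rfl
    intro h _
    rw [hprod, hGx]
    ring
  simp only [lhs_eq, rhs_eq]
  rw [← Finset.sum_mul, ← Finset.sum_mul, hp1, one_mul]


lemma wgt_nonneg (hp0 : ∀ x, 0 ≤ p x) (c : K → X) : 0 ≤ ∏ k, p (c k) :=
  Finset.prod_nonneg fun k _ => hp0 (c k)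

/-- expectation of a function of a single coordinate -/
lemma exp_eval (hp1 : ∑ x, p x = 1) (j : K) (F : X → ℝ) :
    ∑ c : K → X, (∏ k, p (c k)) * F (c j) = ∑ x, p x * F x := by
  classical
  have := exp_indep p hp1 j F (fun _ => 1) (fun _ _ => rfl)
  simpa [sum_wgt p hp1] using this

/-- independence of two coordinates -/
lemma exp_eval_two (hp1 : ∑ x, p x = 1) {j k : K} (hjk : j ≠ k) (F G : X → ℝ) :
    ∑ c : K → X, (∏ k', p (c k')) * (F (c j) * G (c k))
      = (∑ x, p x * F x) * (∑ x, p x * G x) := by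
  classical
  rw [exp_indep p hp1 j F (fun c => G (c k))
    (fun c x => by simp only [Function.update_of_ne (Ne.symm hjk)]), exp_eval p hp1 k G]

/-- Jensen's inequality for `rpow`, `0 < t ≤ 1`, for an expectation. -/
lemma exp_rpow_le {ι : Type*} [Fintype ι] (w z : ι → ℝ) (hw : ∀ i, 0 ≤ w i)
    (hw1 : ∑ i, w i = 1) (hz : ∀ i, 0 ≤ z i) {t : ℝ} (ht0 : 0 < t) (ht1 : t ≤ 1) :
    ∑ i, w i * z i ^ t ≤ (∑ i, w i * z i) ^ t := by
  have hp : (1:ℝ) ≤ 1 / t := by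
    rw [le_div_iff₀ ht0]; linarith
  have h := Real.arith_mean_le_rpow_mean univ w (fun i => z i ^ t)
    (fun i _ => hw i) hw1 (fun i _ => Real.rpow_nonneg (hz i) t) hp
  have heq : ∀ i : ι, (z i ^ t) ^ (1/t) = z i := by
    intro i
    rw [one_div, Real.rpow_rpow_inv (hz i) (ne_of_gt ht0)]
  calc ∑ i, w i * z i ^ t ≤ (∑ i, w i * (z i ^ t) ^ (1/t)) ^ (1/(1/t)) := h
    _ = (∑ i, w i * z i) ^ t := by
        rw [one_div_one_div]
        congr 1
        exact Finset.sum_congr rfl fun i _ => by rw [heq]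


/-- E|T| ≤ √(E T²) for a finite expectation. -/
lemma exp_abs_le_sqrt {ι : Type*} [Fintype ι] (w T : ι → ℝ) (hw : ∀ i, 0 ≤ w i)
    (hw1 : ∑ i, w i = 1) :
    ∑ i, w i * |T i| ≤ Real.sqrt (∑ i, w i * (T i)^2) := by
  have h2 : 0 ≤ ∑ i, w i * (T i)^2 :=
    Finset.sum_nonneg fun i _ => mul_nonneg (hw i) (sq_nonneg _)
  rw [Real.le_sqrt (Finset.sum_nonneg fun i _ => mul_nonneg (hw i) (abs_nonneg _)) h2]
  have hcs := Finset.sum_mul_sq_le_sq_mul_sq univ (fun i => Real.sqrt (w i))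
    (fun i => Real.sqrt (w i) * |T i|)
  have he1 : ∀ i : ι, Real.sqrt (w i) * (Real.sqrt (w i) * |T i|) = w i * |T i| := by
    intro i; rw [← mul_assoc, Real.mul_self_sqrt (hw i)]
  have he2 : ∀ i : ι, Real.sqrt (w i) ^ 2 = w i := fun i => Real.sq_sqrt (hw i)
  have he3 : ∀ i : ι, (Real.sqrt (w i) * |T i|) ^ 2 = w i * (T i)^2 := by
    intro i; rw [mul_pow, Real.sq_sqrt (hw i), sq_abs]
  calc (∑ i, w i * |T i|) ^ 2
      = (∑ i, Real.sqrt (w i) * (Real.sqrt (w i) * |T i|)) ^ 2 := by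
        congr 1; exact Finset.sum_congr rfl fun i _ => (he1 i).symm
    _ ≤ (∑ i, Real.sqrt (w i) ^ 2) * ∑ i, (Real.sqrt (w i) * |T i|) ^ 2 := hcs
    _ = ∑ i, w i * (T i)^2 := by
        simp only [he2, he3, hw1, one_mul]

/-- some outcome is at most the average. -/
lemma exists_le_expectation {ι : Type*} [Fintype ι] (w F : ι → ℝ) (hw : ∀ i, 0 ≤ w i)
    (hw1 : ∑ i, w i = 1) : ∃ i, F i ≤ ∑ i, w i * F i := by
  by_contra hcon
  push_neg at hcon
  have hne : ∃ i, 0 < w i := by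
    by_contra hno
    push_neg at hno
    have : ∑ i, w i ≤ 0 := Finset.sum_nonpos fun i _ => hno i
    rw [hw1] at this; linarith
  obtain ⟨i0, hi0⟩ := hne
  set E := ∑ i, w i * F i with hE
  have hlt : ∑ i : ι, w i * E < ∑ i : ι, w i * F i := by
    apply Finset.sum_lt_sum
    · exact fun i _ => mul_le_mul_of_nonneg_left (le_of_lt (hcon i)) (hw i)
    · exact ⟨i0, Finset.mem_univ i0, by
        exact mul_lt_mul_of_pos_left (hcon i0) hi0⟩
  rw [← Finset.sum_mul, hw1, one_mul] at hlt
  exact lt_irrefl E hlt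


/-- Gallager's pointwise trick : if `a ≤ b` and `b^u` is one of the summands of `S`,
then `a ≤ a^u * S^t` where `u = 1/(1+t)`. -/
lemma chain1 {a b S t : ℝ} (ha : 0 ≤ a) (hab : a ≤ b) (ht : 0 < t)
    (hbS : b ^ (1/(1+t)) ≤ S) : a ≤ a ^ (1/(1+t)) * S ^ t := by
  have h1t : (0:ℝ) < 1 + t := by linarith
  have hu0 : 0 < 1/(1+t) := by positivity
  have hb : 0 ≤ b := le_trans ha hab
  have hS : 0 ≤ S := le_trans (Real.rpow_nonneg hb _) hbS
  rcases eq_or_lt_of_le ha with h0 | hapos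
  · rw [← h0]
    exact mul_nonneg (Real.rpow_nonneg le_rfl _) (Real.rpow_nonneg hS _)
  · have key : a ^ (1/(1+t)) * (a ^ (1/(1+t))) ^ t = a := by
      rw [← Real.rpow_mul ha, ← Real.rpow_add hapos]
      have he : 1/(1+t) + 1/(1+t)*t = 1 := by field_simp
      rw [he, Real.rpow_one]
    calc a = a ^ (1/(1+t)) * (a ^ (1/(1+t))) ^ t := key.symm
      _ ≤ a ^ (1/(1+t)) * S ^ t := by
          apply mul_le_mul_of_nonneg_left _ (Real.rpow_nonneg ha _)
          calc (a ^ (1/(1+t))) ^ t ≤ (b ^ (1/(1+t))) ^ t := by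
                apply Real.rpow_le_rpow (Real.rpow_nonneg ha _)
                  (Real.rpow_le_rpow ha hab (le_of_lt hu0)) (le_of_lt ht)
            _ ≤ S ^ t := Real.rpow_le_rpow (Real.rpow_nonneg hb _) hbS (le_of_lt ht)

/-- truncated second moment bound -/
lemma trunc_sq {W τ r : ℝ} (hW : 0 ≤ W) (hτ : 0 < τ) (hWτ : W ≤ τ)
    (hr1 : 1 ≤ r) (hr2 : r ≤ 2) : W^2 ≤ τ^(2-r) * W^r := by
  rcases eq_or_lt_of_le hW with h0 | hW0
  · rw [← h0, Real.zero_rpow (by linarith : r ≠ 0)]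
    norm_num
  · have : W^(2:ℝ) = W^(2-r) * W^r := by
      rw [← Real.rpow_add hW0]; ring_nf
    calc W^2 = W^(2:ℝ) := by
          rw [← Real.rpow_natCast W 2]; norm_num
      _ = W^(2-r) * W^r := this
      _ ≤ τ^(2-r) * W^r := by
          apply mul_le_mul_of_nonneg_right
            (Real.rpow_le_rpow hW hWτ (by linarith)) (Real.rpow_nonneg hW r)

/-- truncated tail bound -/
lemma trunc_tail {W τ r : ℝ} (hτ : 0 < τ) (hτW : τ < W) (hr1 : 1 ≤ r) :
    W ≤ τ^(1-r) * W^r := by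
  have hW0 : 0 < W := lt_trans hτ hτW
  have h1 : W = W^(1-r) * W^r := by
    rw [← Real.rpow_add hW0]; norm_num
  have hfinal : W^(1-r) ≤ τ^(1-r) := ?_
  · calc W = W^(1-r) * W^r := h1
      _ ≤ τ^(1-r) * W^r :=
        mul_le_mul_of_nonneg_right hfinal (Real.rpow_nonneg (le_of_lt hW0) r)
  have h2 : τ^(r-1) ≤ W^(r-1) :=
    Real.rpow_le_rpow (le_of_lt hτ) (le_of_lt hτW) (by linarith)
  have h3 : (W^(r-1))⁻¹ ≤ (τ^(r-1))⁻¹ :=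
    inv_anti₀ (Real.rpow_pos_of_pos hτ _) h2
  calc W^(1-r) = (W^(r-1))⁻¹ := by
        rw [← neg_sub r 1, Real.rpow_neg (le_of_lt hW0)]
    _ ≤ (τ^(r-1))⁻¹ := h3
    _ = τ^(1-r) := by rw [← neg_sub r 1, Real.rpow_neg (le_of_lt hτ)]


/-- swap an expectation and a finite sum -/
lemma exp_sum {ι : Type*} [Fintype ι] (w : ι → ℝ) {κ : Type*} (s : Finset κ) (f : ι → κ → ℝ) :
    ∑ i, w i * ∑ k ∈ s, f i k = ∑ k ∈ s, ∑ i, w i * f i k := by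
  simp_rw [Finset.mul_sum]
  exact Finset.sum_comm

/-- swap an expectation and a double sum with a constant -/
lemma exp_sum2 {ι : Type*} [Fintype ι] (w : ι → ℝ) (a : ℝ) {κ1 κ2 : Type*} [Fintype κ1]
    [Fintype κ2] (g : ι → κ1 → κ2 → ℝ) :
    ∑ i, w i * (a * ∑ k : κ1, ∑ y : κ2, g i k y)
      = a * ∑ k : κ1, ∑ y : κ2, ∑ i, w i * g i k y := by
  have h1 : ∀ i, w i * (a * ∑ k : κ1, ∑ y : κ2, g i k y)
      = a * (w i * ∑ k : κ1, ∑ y : κ2, g i k y) := fun i => by ring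
  rw [Finset.sum_congr rfl fun i _ => h1 i, ← Finset.mul_sum]
  congr 1
  rw [exp_sum]
  apply Finset.sum_congr rfl
  intro k _
  rw [exp_sum]

/-- the final algebraic identity for the Eve bound -/
lemma eve_algebra {m l t : ℝ} (hm : 0 < m) (hl : 1 ≤ l) (ht0 : 0 < t) (ht2 : t ≤ 1/2) :
    Real.sqrt (l⁻¹ * (((m*l)^(1-t))^(2 - 1/(1-t)) * m))
      + 2 * (((m*l)^(1-t))^(1 - 1/(1-t)) * m)
      ≤ 3 * (m^(1-t) * ((l:ℝ)^t)⁻¹) := by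
  have hl0 : (0:ℝ) < l := lt_of_lt_of_le one_pos hl
  have h1t : (0:ℝ) < 1 - t := by linarith
  have hml : (0:ℝ) < m * l := mul_pos hm hl0
  have hm2 : ∀ a b : ℝ, m^a * m^b = m^(a+b) := fun a b => (Real.rpow_add hm a b).symm
  have hl2 : ∀ a b : ℝ, l^a * l^b = l^(a+b) := fun a b => (Real.rpow_add hl0 a b).symm
  have he1 : ((m*l)^(1-t))^(2 - 1/(1-t)) = (m*l)^(1-2*t) := by
    rw [← Real.rpow_mul (le_of_lt hml)]
    congr 1
    field_simp
    ring
  have he2 : ((m*l)^(1-t))^(1 - 1/(1-t)) = (m*l)^(-t) := by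
    rw [← Real.rpow_mul (le_of_lt hml)]
    congr 1
    field_simp
    ring
  have hrho : 0 ≤ m^(1-t) * ((l:ℝ)^t)⁻¹ :=
    mul_nonneg (Real.rpow_nonneg (le_of_lt hm) _)
      (inv_nonneg.mpr (Real.rpow_nonneg (le_of_lt hl0) _))
  have hsq : l⁻¹ * ((m*l)^(1-2*t) * m) = (m^(1-t) * ((l:ℝ)^t)⁻¹)^2 := by
    calc l⁻¹ * ((m*l)^(1-2*t) * m)
        = (m^(1-2*t) * m^(1:ℝ)) * (l^(1-2*t) * l^(-1:ℝ)) := by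
          rw [Real.mul_rpow hm.le hl0.le, Real.rpow_one, Real.rpow_neg_one]
          ring
      _ = m^((1-2*t)+1) * l^((1-2*t)+(-1)) := by rw [hm2, hl2]
      _ = (m^(1-t) * m^(1-t)) * (l^(-t) * l^(-t)) := by
          rw [hm2, hl2]
          congr 1 <;> [skip; skip] <;> congr 1 <;> ring
      _ = (m^(1-t) * ((l:ℝ)^t)⁻¹)^2 := by
          rw [Real.rpow_neg (le_of_lt hl0)]
          ring
  have hterm2 : (m*l)^(-t) * m = m^(1-t) * ((l:ℝ)^t)⁻¹ := by
    calc (m*l)^(-t) * m = (m^(-t) * m^(1:ℝ)) * l^(-t) := by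
          rw [Real.mul_rpow hm.le hl0.le, Real.rpow_one]
          ring
      _ = m^((-t)+1) * l^(-t) := by rw [hm2]
      _ = m^(1-t) * ((l:ℝ)^t)⁻¹ := by
          rw [Real.rpow_neg (le_of_lt hl0)]
          congr 2
          ring
  rw [he1, he2, hsq, hterm2, Real.sqrt_sq hrho]
  linarith

end Stmt17Aux


set_option maxHeartbeats 1000000 in
open Stmt17Aux in
/-- **Wire-tap channel coding theorem with universal₂ hashing.** For finite sets `X`, `Y`,
`Z`, a main channel `WB`, a wire-tapper's channel `WE`, positive integers `L`, `M` and a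
distribution `p` on `X`, there is a code `Φ = (M, {Q_i}, {D_i})` with
`ε_B(Φ) ≤ 2 min_{0≤t≤1} (ML)^t e^{φ(-t|WB,p)}` and
`d₁(Φ|E) ≤ 6 min_{0≤t≤1/2} e^{φ(t|WE,p)} / L^t`. -/
theorem stmt_17 {X Y Z : Type*} [Fintype X] [Fintype Y] [Fintype Z] [DecidableEq Y]
    (WB : X → Y → ℝ) (hWB0 : ∀ x y, 0 ≤ WB x y) (hWB1 : ∀ x, ∑ y, WB x y = 1)
    (WE : X → Z → ℝ) (hWE0 : ∀ x z, 0 ≤ WE x z) (hWE1 : ∀ x, ∑ z, WE x z = 1)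
    (L M : ℕ) (hL : 0 < L) (hM : 0 < M)
    (p : X → ℝ) (hp0 : ∀ x, 0 ≤ p x) (hp1 : ∑ x, p x = 1) :
    ∃ (Q : Fin M → X → ℝ) (D : Fin M → Finset Y),
      (∀ i x, 0 ≤ Q i x) ∧ (∀ i, ∑ x, Q i x = 1) ∧
      (∀ i j, i ≠ j → Disjoint (D i) (D j)) ∧
      (1 / (M : ℝ)) * ∑ i, ∑ x, Q i x * ∑ y ∈ (D i)ᶜ, WB x y
        ≤ 2 * sInf ((fun t : ℝ => ((M : ℝ) * L) ^ t *
            ∑ y, (∑ x, p x * WB x y ^ (1 / (1 + t))) ^ (1 + t)) '' Set.Icc 0 1) ∧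
      (∑ i : Fin M, ∑ z,
          |(1 / (M : ℝ)) * (∑ x, Q i x * WE x z)
            - (1 / (M : ℝ)) * ((1 / (M : ℝ)) * ∑ j, ∑ x, Q j x * WE x z)|)
        ≤ 6 * sInf ((fun t : ℝ =>
            (∑ z, (∑ x, p x * WE x z ^ (1 / (1 - t))) ^ (1 - t)) / (L : ℝ) ^ t) ''
            Set.Icc 0 (1 / 2)) := by
  classical
  haveI hMne : Nonempty (Fin M) := ⟨⟨0, hM⟩⟩
  haveI hLne : Nonempty (Fin L) := ⟨⟨0, hL⟩⟩
  set fB : ℝ → ℝ := fun t : ℝ => ((M : ℝ) * L) ^ t *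
      ∑ y, (∑ x, p x * WB x y ^ (1 / (1 + t))) ^ (1 + t) with hfB
  set fE : ℝ → ℝ := fun t : ℝ =>
      (∑ z, (∑ x, p x * WE x z ^ (1 / (1 - t))) ^ (1 - t)) / (L : ℝ) ^ t with hfE
  -- basic facts about the distribution
  have hML1 : (1:ℝ) ≤ (M:ℝ) * L := by
    have : (1:ℕ) ≤ M * L := Nat.one_le_iff_ne_zero.mpr (Nat.mul_ne_zero hM.ne' hL.ne')
    calc (1:ℝ) = ((1:ℕ):ℝ) := by norm_num
      _ ≤ ((M*L : ℕ):ℝ) := Nat.cast_le.mpr this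
      _ = (M:ℝ) * L := by push_cast; ring
  have hMLpos : (0:ℝ) < (M:ℝ) * L := lt_of_lt_of_le one_pos hML1
  have hL1 : (1:ℝ) ≤ (L:ℝ) := by exact_mod_cast hL
  have hMpos : (0:ℝ) < (M:ℝ) := by exact_mod_cast hM
  -- the maximum-likelihood decoder
  have hargmax : ∀ (c : Fin M × Fin L → X) (y : Y),
      ∃ k : Fin M × Fin L, ∀ k', WB (c k') y ≤ WB (c k) y := by
    intro c y
    obtain ⟨k, -, hk⟩ := Finset.exists_max_image univ (fun k => WB (c k) y) univ_nonempty
    exact ⟨k, fun k' => hk k' (mem_univ _)⟩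
  choose jstar hjstar using hargmax
  -- code-dependent objects
  set Qc : (Fin M × Fin L → X) → Fin M → X → ℝ :=
    fun c i x => (1/(L:ℝ)) * ∑ l, if c (i,l) = x then 1 else 0 with hQc
  set Dc : (Fin M × Fin L → X) → Fin M → Finset Y :=
    fun c i => univ.filter (fun y => (jstar c y).1 = i) with hDc
  set P : (Fin M × Fin L → X) → ℝ := fun c => ∏ k, p (c k) with hP
  set eps : (Fin M × Fin L → X) → ℝ :=
    fun c => (1 / (M : ℝ)) * ∑ i, ∑ x, Qc c i x * ∑ y ∈ (Dc c i)ᶜ, WB x y with heps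
  set d1 : (Fin M × Fin L → X) → ℝ :=
    fun c => ∑ i : Fin M, ∑ z,
      |(1 / (M : ℝ)) * (∑ x, Qc c i x * WE x z)
        - (1 / (M : ℝ)) * ((1 / (M : ℝ)) * ∑ j, ∑ x, Qc c j x * WE x z)| with hd1
  have hP0 : ∀ c, 0 ≤ P c := fun c => wgt_nonneg p hp0 c
  have hP1 : ∑ c, P c = 1 := sum_wgt p hp1
  have hQ0 : ∀ c i x, 0 ≤ Qc c i x := by
    intro c i x
    apply mul_nonneg (by positivity)
    apply Finset.sum_nonneg
    intro l _
    split <;> norm_num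
  have hQsum : ∀ (c : Fin M × Fin L → X) (i : Fin M) (g : X → ℝ),
      ∑ x, Qc c i x * g x = (1/(L:ℝ)) * ∑ l, g (c (i,l)) := by
    intro c i g
    rw [hQc]
    simp only [mul_assoc, ← Finset.sum_mul]
    rw [← Finset.mul_sum]
    congr 1
    simp only [Finset.sum_mul]
    rw [Finset.sum_comm]
    apply Finset.sum_congr rfl
    intro l _
    simp only [ite_mul, one_mul, zero_mul, Finset.sum_ite_eq, mem_univ, if_true]
  have hQ1 : ∀ c i, ∑ x, Qc c i x = 1 := by
    intro c i
    have := hQsum c i (fun _ => 1)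
    simp only [mul_one] at this
    rw [this, Finset.sum_const]
    simp [Finset.card_univ]
    field_simp
  have hPindep : ∀ (j : Fin M × Fin L) (F : X → ℝ) (G : (Fin M × Fin L → X) → ℝ),
      (∀ c x, G (Function.update c j x) = G c) →
      ∑ c, P c * (F (c j) * G c) = (∑ x, p x * F x) * ∑ c, P c * G c := by
    intro j F G hG
    simp only [hP]
    exact exp_indep p hp1 j F G hG
  have hPeval : ∀ (j : Fin M × Fin L) (F : X → ℝ),
      ∑ c, P c * F (c j) = ∑ x, p x * F x := by
    intro j F
    simp only [hP]
    exact exp_eval p hp1 j F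
  have hPeval2 : ∀ (j k : Fin M × Fin L), j ≠ k → ∀ (F G : X → ℝ),
      ∑ c, P c * (F (c j) * G (c k)) = (∑ x, p x * F x) * (∑ x, p x * G x) := by
    intro j k hjk F G
    simp only [hP]
    exact exp_eval_two p hp1 hjk F G
  -- the Bob estimate
  have hepsform : ∀ c, eps c = (1/((M:ℝ)*L)) *
      ∑ k : Fin M × Fin L, ∑ y ∈ (Dc c k.1)ᶜ, WB (c k) y := by
    intro c
    rw [heps]
    simp only [hQsum]
    calc (1/(M:ℝ)) * ∑ i, (1/(L:ℝ)) * ∑ l, ∑ y ∈ (Dc c i)ᶜ, WB (c (i,l)) y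
        = (1/((M:ℝ)*L)) * ∑ i, ∑ l, ∑ y ∈ (Dc c i)ᶜ, WB (c (i,l)) y := by
          rw [Finset.mul_sum, Finset.mul_sum]
          apply Finset.sum_congr rfl
          intro i _
          rw [← mul_assoc, div_mul_div_comm, one_mul]
      _ = (1/((M:ℝ)*L)) * ∑ k : Fin M × Fin L, ∑ y ∈ (Dc c k.1)ᶜ, WB (c k) y := by
          rw [Fintype.sum_prod_type]
  have hepsle1 : ∀ c, eps c ≤ 1 := by
    intro c
    rw [heps]
    have hin : ∀ (i : Fin M), ∑ x, Qc c i x * ∑ y ∈ (Dc c i)ᶜ, WB x y ≤ 1 := by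
      intro i
      calc ∑ x, Qc c i x * ∑ y ∈ (Dc c i)ᶜ, WB x y ≤ ∑ x, Qc c i x * 1 := by
            apply Finset.sum_le_sum
            intro x _
            apply mul_le_mul_of_nonneg_left _ (hQ0 c i x)
            calc ∑ y ∈ (Dc c i)ᶜ, WB x y ≤ ∑ y, WB x y :=
                  Finset.sum_le_sum_of_subset_of_nonneg (Finset.subset_univ _)
                    (fun y _ _ => hWB0 x y)
              _ = 1 := hWB1 x
        _ = 1 := by simp only [mul_one]; exact hQ1 c i
    calc (1/(M:ℝ)) * ∑ i, ∑ x, Qc c i x * ∑ y ∈ (Dc c i)ᶜ, WB x y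
        ≤ (1/(M:ℝ)) * ∑ i : Fin M, 1 := by
          apply mul_le_mul_of_nonneg_left _ (by positivity)
          exact Finset.sum_le_sum fun i _ => hin i
      _ = 1 := by
          rw [Finset.sum_const, Finset.card_univ, Fintype.card_fin]
          simp
          field_simp
  have hBob : ∀ t ∈ Set.Icc (0:ℝ) 1, ∑ c, P c * eps c ≤ fB t := by
    intro t ht
    obtain ⟨ht0, ht1⟩ := ht
    rcases eq_or_lt_of_le ht0 with ht0' | ht0'
    · -- t = 0 : the bound is trivial
      have hfB0 : fB t = 1 := by
        rw [hfB, ← ht0']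
        simp only [Real.rpow_zero, one_mul]
        norm_num [Real.rpow_one]
        rw [Finset.sum_comm]
        calc ∑ x, ∑ y, p x * WB x y = ∑ x, p x := by
              apply Finset.sum_congr rfl
              intro x _
              rw [← Finset.mul_sum, hWB1, mul_one]
          _ = 1 := hp1
      rw [hfB0]
      calc ∑ c, P c * eps c ≤ ∑ c, P c * 1 :=
            Finset.sum_le_sum fun c _ => mul_le_mul_of_nonneg_left (hepsle1 c) (hP0 c)
        _ = 1 := by simp only [mul_one]; exact hP1
    · -- 0 < t
      have h1t : (0:ℝ) < 1 + t := by linarith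
      have hpoint : ∀ c, eps c ≤ (1/((M:ℝ)*L)) * ∑ k : Fin M × Fin L, ∑ y,
          WB (c k) y ^ (1/(1+t)) *
            (∑ k' ∈ univ.erase k, WB (c k') y ^ (1/(1+t))) ^ t := by
        intro c
        rw [hepsform c]
        apply mul_le_mul_of_nonneg_left _ (by positivity)
        apply Finset.sum_le_sum
        intro k _
        have hterm : ∀ y ∈ (Dc c k.1)ᶜ, WB (c k) y ≤
            WB (c k) y ^ (1/(1+t)) *
              (∑ k' ∈ univ.erase k, WB (c k') y ^ (1/(1+t))) ^ t := by
          intro y hy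
          have hne : jstar c y ≠ k := by
            intro hcon
            rw [hDc] at hy
            simp only [Finset.mem_compl, Finset.mem_filter, Finset.mem_univ, true_and] at hy
            exact hy (by rw [hcon])
          apply chain1 (hWB0 _ _) (hjstar c y k) ht0'
          exact Finset.single_le_sum (f := fun k' => WB (c k') y ^ (1/(1+t)))
            (fun k' _ => Real.rpow_nonneg (hWB0 _ _) _)
            (Finset.mem_erase.mpr ⟨hne, mem_univ _⟩)
        calc ∑ y ∈ (Dc c k.1)ᶜ, WB (c k) y
            ≤ ∑ y ∈ (Dc c k.1)ᶜ, WB (c k) y ^ (1/(1+t)) *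
                (∑ k' ∈ univ.erase k, WB (c k') y ^ (1/(1+t))) ^ t :=
              Finset.sum_le_sum hterm
          _ ≤ ∑ y, WB (c k) y ^ (1/(1+t)) *
                (∑ k' ∈ univ.erase k, WB (c k') y ^ (1/(1+t))) ^ t := by
              apply Finset.sum_le_sum_of_subset_of_nonneg (Finset.subset_univ _)
              intro y _ _
              apply mul_nonneg (Real.rpow_nonneg (hWB0 _ _) _)
              apply Real.rpow_nonneg
              exact Finset.sum_nonneg fun k' _ => Real.rpow_nonneg (hWB0 _ _) _
      have hky : ∀ (k : Fin M × Fin L) (y : Y),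
          ∑ c, P c * (WB (c k) y ^ (1/(1+t)) *
            (∑ k' ∈ univ.erase k, WB (c k') y ^ (1/(1+t))) ^ t)
          ≤ (∑ x, p x * WB x y ^ (1/(1+t))) *
              (((M:ℝ)*L) ^ t * (∑ x, p x * WB x y ^ (1/(1+t))) ^ t) := by
        intro k y
        have hay0 : 0 ≤ ∑ x, p x * WB x y ^ (1/(1+t)) :=
          Finset.sum_nonneg fun x _ => mul_nonneg (hp0 x) (Real.rpow_nonneg (hWB0 x y) _)
        have hGupd : ∀ (c : Fin M × Fin L → X) (x : X),
            (fun c => (∑ k' ∈ univ.erase k, WB (c k') y ^ (1/(1+t))) ^ t)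
              (Function.update c k x)
            = (fun c => (∑ k' ∈ univ.erase k, WB (c k') y ^ (1/(1+t))) ^ t) c := by
          intro c x
          show (∑ k' ∈ univ.erase k, WB ((Function.update c k x) k') y ^ (1/(1+t))) ^ t
            = (∑ k' ∈ univ.erase k, WB (c k') y ^ (1/(1+t))) ^ t
          congr 1
          apply Finset.sum_congr rfl
          intro k' hk'
          rw [Function.update_of_ne (Finset.mem_erase.mp hk').1]
        rw [hPindep k (fun x => WB x y ^ (1/(1+t))) _ hGupd]
        apply mul_le_mul_of_nonneg_left _ hay0
        -- Jensen + linearity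
        have hjen : ∑ c, P c * (∑ k' ∈ univ.erase k, WB (c k') y ^ (1/(1+t))) ^ t
            ≤ (∑ c, P c * ∑ k' ∈ univ.erase k, WB (c k') y ^ (1/(1+t))) ^ t := by
          apply exp_rpow_le P _ hP0 hP1 _ ht0' ht1
          intro c
          exact Finset.sum_nonneg fun k' _ => Real.rpow_nonneg (hWB0 _ _) _
        have hES : ∑ c, P c * ∑ k' ∈ univ.erase k, WB (c k') y ^ (1/(1+t))
            = ((M*L - 1 : ℕ) : ℝ) * ∑ x, p x * WB x y ^ (1/(1+t)) := by
          rw [exp_sum]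
          have heach : ∀ k' ∈ univ.erase k,
              ∑ c, P c * WB (c k') y ^ (1/(1+t)) = ∑ x, p x * WB x y ^ (1/(1+t)) :=
            fun k' _ => hPeval k' (fun x => WB x y ^ (1/(1+t)))
          rw [Finset.sum_congr rfl heach, Finset.sum_const,
            Finset.card_erase_of_mem (mem_univ _), Finset.card_univ]
          simp only [Fintype.card_prod, Fintype.card_fin, nsmul_eq_mul]
        have hcast : ((M*L - 1 : ℕ) : ℝ) ≤ (M:ℝ)*L := by
          calc ((M*L - 1 : ℕ) : ℝ) ≤ ((M*L : ℕ) : ℝ) := Nat.cast_le.mpr (Nat.sub_le _ _)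
            _ = (M:ℝ)*L := by push_cast; ring
        calc ∑ c, P c * (∑ k' ∈ univ.erase k, WB (c k') y ^ (1/(1+t))) ^ t
            ≤ (∑ c, P c * ∑ k' ∈ univ.erase k, WB (c k') y ^ (1/(1+t))) ^ t := hjen
          _ = (((M*L - 1 : ℕ) : ℝ) * ∑ x, p x * WB x y ^ (1/(1+t))) ^ t := by rw [hES]
          _ ≤ (((M:ℝ)*L) * ∑ x, p x * WB x y ^ (1/(1+t))) ^ t := by
              apply Real.rpow_le_rpow (mul_nonneg (Nat.cast_nonneg _) hay0)
                (mul_le_mul_of_nonneg_right hcast hay0) (le_of_lt ht0')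
          _ = ((M:ℝ)*L) ^ t * (∑ x, p x * WB x y ^ (1/(1+t))) ^ t :=
              Real.mul_rpow (by positivity) hay0
      calc ∑ c, P c * eps c
          ≤ ∑ c, P c * ((1/((M:ℝ)*L)) * ∑ k : Fin M × Fin L, ∑ y,
              WB (c k) y ^ (1/(1+t)) *
                (∑ k' ∈ univ.erase k, WB (c k') y ^ (1/(1+t))) ^ t) :=
            Finset.sum_le_sum fun c _ => mul_le_mul_of_nonneg_left (hpoint c) (hP0 c)
        _ = (1/((M:ℝ)*L)) * ∑ k : Fin M × Fin L, ∑ y, ∑ c, P c *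
              (WB (c k) y ^ (1/(1+t)) *
                (∑ k' ∈ univ.erase k, WB (c k') y ^ (1/(1+t))) ^ t) := by
            exact exp_sum2 P (1/((M:ℝ)*L)) _
        _ ≤ (1/((M:ℝ)*L)) * ∑ k : Fin M × Fin L, ∑ y,
              (∑ x, p x * WB x y ^ (1/(1+t))) *
                (((M:ℝ)*L) ^ t * (∑ x, p x * WB x y ^ (1/(1+t))) ^ t) := by
            apply mul_le_mul_of_nonneg_left _ (by positivity)
            apply Finset.sum_le_sum
            intro k _
            apply Finset.sum_le_sum
            intro y _
            exact hky k y
        _ = fB t := by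
            have hyterm : ∀ y:Y, (∑ x, p x * WB x y ^ (1/(1+t))) *
                (((M:ℝ)*L)^t * (∑ x, p x * WB x y ^ (1/(1+t)))^t)
                = ((M:ℝ)*L)^t * (∑ x, p x * WB x y ^ (1/(1+t)))^(1+t) := by
              intro y
              have hay0 : 0 ≤ ∑ x, p x * WB x y ^ (1/(1+t)) :=
                Finset.sum_nonneg fun x _ =>
                  mul_nonneg (hp0 x) (Real.rpow_nonneg (hWB0 x y) _)
              rw [Real.rpow_add' hay0 (by linarith : (1:ℝ) + t ≠ 0), Real.rpow_one]
              ring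
            rw [Finset.sum_congr rfl (fun k _ => Finset.sum_congr rfl fun y (_ : y ∈ univ) => hyterm y)]
            rw [Finset.sum_const, Finset.card_univ]
            simp only [Fintype.card_prod, Fintype.card_fin, nsmul_eq_mul]
            rw [hfB, ← Finset.mul_sum]
            rw [← mul_assoc]
            have : (1/((M:ℝ)*L)) * ((M:ℝ)*(L:ℝ)) = 1 := by
              field_simp
            push_cast
            rw [this, one_mul]
  -- the Eve estimate
  have hEve : ∀ t ∈ Set.Icc (0:ℝ) (1/2:ℝ), ∑ c, P c * d1 c ≤ 3 * fE t := by
    have hL0 : (0:ℝ) < (L:ℝ) := by linarith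
    -- the coefficient vector
    set gam : Fin M → Fin M × Fin L → ℝ :=
      fun i k => (if k.1 = i then ((L:ℝ))⁻¹ else 0) - ((M:ℝ)*(L:ℝ))⁻¹ with hgam
    have hsum_ite : ∀ i : Fin M,
        ∑ k : Fin M × Fin L, (if k.1 = i then ((L:ℝ))⁻¹ else 0) = 1 := by
      intro i
      rw [Fintype.sum_prod_type]
      have hin : ∀ i' : Fin M, ∑ _l : Fin L, (if i' = i then ((L:ℝ))⁻¹ else 0)
          = if i' = i then 1 else 0 := by
        intro i'
        rw [Finset.sum_const, Finset.card_univ, Fintype.card_fin, nsmul_eq_mul]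
        split
        · field_simp
        · ring
      rw [Finset.sum_congr rfl (fun i' _ => hin i')]
      simp [Finset.sum_ite_eq']
    have hsum_c : ∑ _k : Fin M × Fin L, ((M:ℝ)*(L:ℝ))⁻¹ = 1 := by
      rw [Finset.sum_const, Finset.card_univ, Fintype.card_prod, Fintype.card_fin,
        Fintype.card_fin, nsmul_eq_mul]
      push_cast
      field_simp
    have hgam_sum : ∀ i, ∑ k : Fin M × Fin L, gam i k = 0 := by
      intro i
      simp only [hgam]
      rw [Finset.sum_sub_distrib, hsum_ite i, hsum_c]
      ring
    have hgam_abs : ∀ i, ∑ k : Fin M × Fin L, |gam i k| ≤ 2 := by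
      intro i
      have hper : ∀ k : Fin M × Fin L,
          |gam i k| ≤ (if k.1 = i then ((L:ℝ))⁻¹ else 0) + ((M:ℝ)*(L:ℝ))⁻¹ := by
        intro k
        simp only [hgam]
        have h1 : (0:ℝ) ≤ (if k.1 = i then ((L:ℝ))⁻¹ else 0) := by
          split
          · positivity
          · exact le_rfl
        have h2 : (0:ℝ) ≤ ((M:ℝ)*(L:ℝ))⁻¹ := by positivity
        rw [abs_le]
        constructor <;> linarith
      calc ∑ k : Fin M × Fin L, |gam i k|
          ≤ ∑ k : Fin M × Fin L, ((if k.1 = i then ((L:ℝ))⁻¹ else 0) + ((M:ℝ)*(L:ℝ))⁻¹) :=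
            Finset.sum_le_sum fun k _ => hper k
        _ = 2 := by rw [Finset.sum_add_distrib, hsum_ite i, hsum_c]; ring
    have hgam_sq : ∀ i, ∑ k : Fin M × Fin L, (gam i k)^2 ≤ ((L:ℝ))⁻¹ := by
      intro i
      have hval : ∑ k : Fin M × Fin L, (gam i k)^2
          = (L:ℝ) * (((L:ℝ))⁻¹ - ((M:ℝ)*(L:ℝ))⁻¹)^2
            + ((M:ℝ)-1) * ((L:ℝ) * (((M:ℝ)*(L:ℝ))⁻¹)^2) := by
        simp only [hgam]
        rw [Fintype.sum_prod_type]
        have hin : ∀ i' : Fin M,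
            ∑ _l : Fin L, ((if i' = i then ((L:ℝ))⁻¹ else 0) - ((M:ℝ)*(L:ℝ))⁻¹)^2
            = (L:ℝ) * ((if i' = i then ((L:ℝ))⁻¹ else 0) - ((M:ℝ)*(L:ℝ))⁻¹)^2 := by
          intro i'
          rw [Finset.sum_const, Finset.card_univ, Fintype.card_fin, nsmul_eq_mul]
        rw [Finset.sum_congr rfl (fun i' _ => hin i')]
        rw [← Finset.add_sum_erase _ _ (mem_univ i), if_pos rfl]
        have hrest : ∀ i' ∈ univ.erase i,
            (L:ℝ) * ((if i' = i then ((L:ℝ))⁻¹ else 0) - ((M:ℝ)*(L:ℝ))⁻¹)^2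
            = (L:ℝ) * ((((M:ℝ)*(L:ℝ))⁻¹)^2) := by
          intro i' hi'
          rw [if_neg (Finset.mem_erase.mp hi').1]
          ring
        rw [Finset.sum_congr rfl hrest, Finset.sum_const,
          Finset.card_erase_of_mem (mem_univ i), Finset.card_univ, Fintype.card_fin,
          nsmul_eq_mul]
        have hMcast : ((M - 1 : ℕ) : ℝ) = (M:ℝ) - 1 := by
          rw [Nat.cast_sub hM]
          norm_num
        rw [hMcast]
      rw [hval]
      have hexp : (L:ℝ) * (((L:ℝ))⁻¹ - ((M:ℝ)*(L:ℝ))⁻¹)^2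
          + ((M:ℝ)-1) * ((L:ℝ) * (((M:ℝ)*(L:ℝ))⁻¹)^2)
          = ((L:ℝ))⁻¹ - ((M:ℝ)*(L:ℝ))⁻¹ := by
        field_simp
        ring
      rw [hexp]
      have : 0 ≤ ((M:ℝ)*(L:ℝ))⁻¹ := by positivity
      linarith
    -- rewriting d1
    have hTform : ∀ (c : Fin M × Fin L → X) (i : Fin M) (z : Z),
        (∑ x, Qc c i x * WE x z) - (1/(M:ℝ)) * ∑ j, ∑ x, Qc c j x * WE x z
        = ∑ k : Fin M × Fin L, gam i k * WE (c k) z := by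
      intro c i z
      have hpart1 : ∑ k : Fin M × Fin L, (if k.1 = i then ((L:ℝ))⁻¹ else 0) * WE (c k) z
          = ∑ x, Qc c i x * WE x z := by
        rw [Fintype.sum_prod_type]
        have hin : ∀ i' : Fin M,
            ∑ l : Fin L, (if i' = i then ((L:ℝ))⁻¹ else 0) * WE (c (i',l)) z
            = if i' = i then ((L:ℝ))⁻¹ * ∑ l, WE (c (i',l)) z else 0 := by
          intro i'
          by_cases h : i' = i
          · simp only [if_pos h]
            rw [Finset.mul_sum]
          · simp only [if_neg h]
            simp
        rw [Finset.sum_congr rfl (fun i' _ => hin i')]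
        rw [Finset.sum_ite_eq' univ i (fun i' => ((L:ℝ))⁻¹ * ∑ l, WE (c (i',l)) z)]
        rw [if_pos (mem_univ i), hQsum c i (fun x => WE x z), one_div]
      have hpart2 : ∑ k : Fin M × Fin L, ((M:ℝ)*(L:ℝ))⁻¹ * WE (c k) z
          = (1/(M:ℝ)) * ∑ j, ∑ x, Qc c j x * WE x z := by
        have hr : ∀ j : Fin M, ∑ x, Qc c j x * WE x z = (1/(L:ℝ)) * ∑ l, WE (c (j,l)) z :=
          fun j => hQsum c j (fun x => WE x z)
        rw [Finset.sum_congr rfl (fun j (_ : j ∈ univ) => hr j), ← Finset.mul_sum,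
          ← Finset.mul_sum, Fintype.sum_prod_type, ← mul_assoc]
        congr 1
        rw [div_mul_div_comm, one_mul, one_div]
      simp only [hgam, sub_mul]
      rw [Finset.sum_sub_distrib, hpart1, hpart2]
    have hd1form : ∀ c, d1 c
        = (1/(M:ℝ)) * ∑ i, ∑ z, |∑ k : Fin M × Fin L, gam i k * WE (c k) z| := by
      intro c
      rw [hd1]
      rw [Finset.mul_sum]
      apply Finset.sum_congr rfl
      intro i _
      rw [Finset.mul_sum]
      apply Finset.sum_congr rfl
      intro z _
      rw [← hTform c i z, ← mul_sub, abs_mul, abs_of_nonneg (by positivity : (0:ℝ) ≤ 1/(M:ℝ))]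
    have hA1 : ∀ (c : Fin M × Fin L → X) (i : Fin M),
        ∑ z, ∑ x, Qc c i x * WE x z = 1 := by
      intro c i
      rw [Finset.sum_comm]
      calc ∑ x, ∑ z, Qc c i x * WE x z = ∑ x, Qc c i x := by
            apply Finset.sum_congr rfl
            intro x _
            rw [← Finset.mul_sum, hWE1, mul_one]
        _ = 1 := hQ1 c i
    intro t ht
    obtain ⟨ht0, ht2⟩ := ht
    rcases eq_or_lt_of_le ht0 with ht0' | ht0'
    · -- t = 0 : trivial bound
      have hfE0 : fE t = 1 := by
        rw [hfE, ← ht0']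
        norm_num [Real.rpow_one, Real.rpow_zero]
        rw [Finset.sum_comm]
        calc ∑ x, ∑ z, p x * WE x z = ∑ x, p x := by
              apply Finset.sum_congr rfl
              intro x _
              rw [← Finset.mul_sum, hWE1, mul_one]
          _ = 1 := hp1
      have hd1le2 : ∀ c, d1 c ≤ 2 := by
        intro c
        rw [hd1]
        have hiz : ∀ i : Fin M, ∑ z, |(1/(M:ℝ)) * (∑ x, Qc c i x * WE x z)
            - (1/(M:ℝ)) * ((1/(M:ℝ)) * ∑ j, ∑ x, Qc c j x * WE x z)| ≤ 2 * (1/(M:ℝ)) := by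
          intro i
          have hper : ∀ z, |(1/(M:ℝ)) * (∑ x, Qc c i x * WE x z)
              - (1/(M:ℝ)) * ((1/(M:ℝ)) * ∑ j, ∑ x, Qc c j x * WE x z)|
              ≤ (1/(M:ℝ)) * (∑ x, Qc c i x * WE x z)
                + (1/(M:ℝ)) * ((1/(M:ℝ)) * ∑ j, ∑ x, Qc c j x * WE x z) := by
            intro z
            have h1 : 0 ≤ (1/(M:ℝ)) * (∑ x, Qc c i x * WE x z) :=
              mul_nonneg (by positivity) (Finset.sum_nonneg fun x _ =>
                mul_nonneg (hQ0 c i x) (hWE0 x z))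
            have h2 : 0 ≤ (1/(M:ℝ)) * ((1/(M:ℝ)) * ∑ j, ∑ x, Qc c j x * WE x z) :=
              mul_nonneg (by positivity) (mul_nonneg (by positivity)
                (Finset.sum_nonneg fun j _ => Finset.sum_nonneg fun x _ =>
                  mul_nonneg (hQ0 c j x) (hWE0 x z)))
            rw [abs_le]
            constructor <;> linarith
          calc ∑ z, |(1/(M:ℝ)) * (∑ x, Qc c i x * WE x z)
              - (1/(M:ℝ)) * ((1/(M:ℝ)) * ∑ j, ∑ x, Qc c j x * WE x z)|
              ≤ ∑ z, ((1/(M:ℝ)) * (∑ x, Qc c i x * WE x z)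
                + (1/(M:ℝ)) * ((1/(M:ℝ)) * ∑ j, ∑ x, Qc c j x * WE x z)) :=
                Finset.sum_le_sum fun z _ => hper z
            _ = 2 * (1/(M:ℝ)) := by
                rw [Finset.sum_add_distrib, ← Finset.mul_sum, hA1 c i, ← Finset.mul_sum,
                  ← Finset.mul_sum]
                have hswap : ∑ z, ∑ j, ∑ x, Qc c j x * WE x z
                    = ∑ j : Fin M, ∑ z, ∑ x, Qc c j x * WE x z := Finset.sum_comm
                rw [hswap, Finset.sum_congr rfl (fun j (_ : j ∈ univ) => hA1 c j),
                  Finset.sum_const, Finset.card_univ, Fintype.card_fin, nsmul_eq_mul,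
                  mul_one]
                have hMne0 : (M:ℝ) ≠ 0 := ne_of_gt hMpos
                field_simp
                ring
        calc ∑ i : Fin M, ∑ z, |(1/(M:ℝ)) * (∑ x, Qc c i x * WE x z)
            - (1/(M:ℝ)) * ((1/(M:ℝ)) * ∑ j, ∑ x, Qc c j x * WE x z)|
            ≤ ∑ _i : Fin M, 2 * (1/(M:ℝ)) := Finset.sum_le_sum fun i _ => hiz i
          _ = 2 := by
              rw [Finset.sum_const, Finset.card_univ, Fintype.card_fin, nsmul_eq_mul]
              field_simp
      rw [hfE0]
      calc ∑ c, P c * d1 c ≤ ∑ c, P c * 2 :=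
            Finset.sum_le_sum fun c _ => mul_le_mul_of_nonneg_left (hd1le2 c) (hP0 c)
        _ = 2 := by rw [← Finset.sum_mul, hP1, one_mul]
        _ ≤ 3 * 1 := by norm_num
    · -- 0 < t : the privacy-amplification estimate
      have h1t : (0:ℝ) < 1 - t := by linarith
      have hr1 : (1:ℝ) ≤ 1/(1-t) := by
        rw [le_div_iff₀ h1t]; linarith
      have hr2 : 1/(1-t) ≤ 2 := by
        rw [div_le_iff₀ h1t]; linarith
      have hrne : 1/(1-t) ≠ 0 := by positivity
      have hEiz : ∀ (i : Fin M) (z : Z),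
          ∑ c, P c * |∑ k : Fin M × Fin L, gam i k * WE (c k) z|
          ≤ 3 * ((∑ x, p x * WE x z ^ (1/(1-t)))^(1-t) * (((L:ℝ))^t)⁻¹) := by
        intro i z
        have hm0 : 0 ≤ ∑ x, p x * WE x z ^ (1/(1-t)) :=
          Finset.sum_nonneg fun x _ => mul_nonneg (hp0 x) (Real.rpow_nonneg (hWE0 x z) _)
        rcases eq_or_lt_of_le hm0 with hm | hm
        · -- degenerate case : m = 0
          have hmu : ∑ x, p x * WE x z = 0 := by
            apply Finset.sum_eq_zero
            intro x _
            have hx := (Finset.sum_eq_zero_iff_of_nonneg (fun x _ =>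
              mul_nonneg (hp0 x) (Real.rpow_nonneg (hWE0 x z) _))).mp hm.symm x (mem_univ x)
            rcases mul_eq_zero.mp hx with h | h
            · rw [h, zero_mul]
            · rw [(Real.rpow_eq_zero (hWE0 x z) hrne).mp h, mul_zero]
          have hb : ∀ c : Fin M × Fin L → X, |∑ k : Fin M × Fin L, gam i k * WE (c k) z|
              ≤ ∑ k : Fin M × Fin L, |gam i k| * WE (c k) z := by
            intro c
            calc |∑ k : Fin M × Fin L, gam i k * WE (c k) z|
                ≤ ∑ k : Fin M × Fin L, |gam i k * WE (c k) z| :=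
                  Finset.abs_sum_le_sum_abs _ _
              _ = ∑ k : Fin M × Fin L, |gam i k| * WE (c k) z := by
                  apply Finset.sum_congr rfl
                  intro k _
                  rw [abs_mul, abs_of_nonneg (hWE0 _ _)]
          have hE0 : ∑ c, P c * |∑ k : Fin M × Fin L, gam i k * WE (c k) z| ≤ 0 := by
            calc ∑ c, P c * |∑ k : Fin M × Fin L, gam i k * WE (c k) z|
                ≤ ∑ c, P c * ∑ k : Fin M × Fin L, |gam i k| * WE (c k) z :=
                  Finset.sum_le_sum fun c _ => mul_le_mul_of_nonneg_left (hb c) (hP0 c)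
              _ = ∑ k : Fin M × Fin L, ∑ c, P c * (|gam i k| * WE (c k) z) := exp_sum P _ _
              _ = ∑ k : Fin M × Fin L, |gam i k| * ∑ c, P c * WE (c k) z := by
                  apply Finset.sum_congr rfl
                  intro k _
                  rw [Finset.mul_sum]
                  apply Finset.sum_congr rfl
                  intro c _
                  ring
              _ = 0 := by
                  apply Finset.sum_eq_zero
                  intro k _
                  rw [hPeval k (fun x => WE x z), hmu, mul_zero]
          have hz0 : (∑ x, p x * WE x z ^ (1/(1-t)))^(1-t) = 0 := by
            rw [← hm, Real.zero_rpow (ne_of_gt h1t)]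
          rw [hz0]
          simpa using hE0
        · -- main case : m > 0
          set m := ∑ x, p x * WE x z ^ (1/(1-t)) with hmdef
          set τ := (m * (L:ℝ)) ^ (1-t) with hτdef
          have hτpos : 0 < τ := Real.rpow_pos_of_pos (mul_pos hm hL0) _
          set Vt : ℝ → ℝ := fun w => if w ≤ τ then w else 0 with hVt
          set Vh : ℝ → ℝ := fun w => if w ≤ τ then 0 else w with hVh
          have hVsplit : ∀ w : ℝ, w = Vt w + Vh w := by
            intro w
            simp only [hVt, hVh]
            split <;> ring
          have hVt0 : ∀ w : ℝ, 0 ≤ w → 0 ≤ Vt w := by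
            intro w hw
            simp only [hVt]
            split
            · exact hw
            · exact le_rfl
          have hVh0 : ∀ w : ℝ, 0 ≤ w → 0 ≤ Vh w := by
            intro w hw
            simp only [hVh]
            split
            · exact le_rfl
            · exact hw
          have hv : ∑ x, p x * (Vt (WE x z) * Vt (WE x z)) ≤ τ^(2 - 1/(1-t)) * m := by
            rw [hmdef, Finset.mul_sum]
            apply Finset.sum_le_sum
            intro x _
            simp only [hVt]
            by_cases hle : WE x z ≤ τ
            · simp only [if_pos hle]
              have h1 := trunc_sq (hWE0 x z) hτpos hle hr1 hr2
              calc p x * (WE x z * WE x z) = p x * (WE x z)^2 := by ring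
                _ ≤ p x * (τ^(2-1/(1-t)) * WE x z^(1/(1-t))) :=
                    mul_le_mul_of_nonneg_left h1 (hp0 x)
                _ = τ^(2-1/(1-t)) * (p x * WE x z^(1/(1-t))) := by ring
            · simp only [if_neg hle]
              have h2 : (0:ℝ) ≤ τ^(2-1/(1-t)) * (p x * WE x z^(1/(1-t))) :=
                mul_nonneg (Real.rpow_nonneg hτpos.le _)
                  (mul_nonneg (hp0 x) (Real.rpow_nonneg (hWE0 x z) _))
              simpa using h2
          have heh : ∑ x, p x * Vh (WE x z) ≤ τ^(1 - 1/(1-t)) * m := by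
            rw [hmdef, Finset.mul_sum]
            apply Finset.sum_le_sum
            intro x _
            simp only [hVh]
            by_cases hle : WE x z ≤ τ
            · simp only [if_pos hle]
              have h2 : (0:ℝ) ≤ τ^(1-1/(1-t)) * (p x * WE x z^(1/(1-t))) :=
                mul_nonneg (Real.rpow_nonneg hτpos.le _)
                  (mul_nonneg (hp0 x) (Real.rpow_nonneg (hWE0 x z) _))
              simpa using h2
            · simp only [if_neg hle]
              push_neg at hle
              have h1 := trunc_tail hτpos hle hr1
              calc p x * WE x z ≤ p x * (τ^(1-1/(1-t)) * WE x z^(1/(1-t))) :=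
                    mul_le_mul_of_nonneg_left h1 (hp0 x)
                _ = τ^(1-1/(1-t)) * (p x * WE x z^(1/(1-t))) := by ring
          have hTsplit : ∀ c : Fin M × Fin L → X,
              ∑ k : Fin M × Fin L, gam i k * WE (c k) z
              = (∑ k : Fin M × Fin L, gam i k * Vt (WE (c k) z))
                + ∑ k : Fin M × Fin L, gam i k * Vh (WE (c k) z) := by
            intro c
            rw [← Finset.sum_add_distrib]
            apply Finset.sum_congr rfl
            intro k _
            rw [← mul_add, ← hVsplit]
          have hpull : ∀ (a : ℝ) (F : (Fin M × Fin L → X) → ℝ),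
              ∑ c, P c * (a * F c) = a * ∑ c, P c * F c := by
            intro a F
            rw [Finset.mul_sum]
            apply Finset.sum_congr rfl
            intro c _
            ring
          have hEkk : ∀ k k' : Fin M × Fin L,
              ∑ c, P c * (Vt (WE (c k) z) * Vt (WE (c k') z))
              = if k' = k then ∑ x, p x * (Vt (WE x z) * Vt (WE x z))
                else (∑ x, p x * Vt (WE x z)) * (∑ x, p x * Vt (WE x z)) := by
            intro k k'
            by_cases h : k' = k
            · rw [if_pos h, h]
              exact hPeval k (fun x => Vt (WE x z) * Vt (WE x z))
            · rw [if_neg h]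
              exact hPeval2 k k' (fun hkk => h hkk.symm)
                (fun x => Vt (WE x z)) (fun x => Vt (WE x z))
          have hvar : ∑ c, P c * (∑ k : Fin M × Fin L, gam i k * Vt (WE (c k) z))^2
              ≤ ((L:ℝ))⁻¹ * (τ^(2 - 1/(1-t)) * m) := by
            have hv0 : 0 ≤ ∑ x, p x * (Vt (WE x z) * Vt (WE x z)) :=
              Finset.sum_nonneg fun x _ => mul_nonneg (hp0 x)
                (mul_nonneg (hVt0 _ (hWE0 x z)) (hVt0 _ (hWE0 x z)))
            have hexpand : ∀ c : Fin M × Fin L → X,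
                (∑ k : Fin M × Fin L, gam i k * Vt (WE (c k) z))^2
                = ∑ k : Fin M × Fin L, ∑ k' : Fin M × Fin L,
                    (gam i k * gam i k') * (Vt (WE (c k) z) * Vt (WE (c k') z)) := by
              intro c
              rw [sq, Finset.sum_mul_sum]
              apply Finset.sum_congr rfl
              intro k _
              apply Finset.sum_congr rfl
              intro k' _
              ring
            have hstep : ∑ c, P c * (∑ k : Fin M × Fin L, gam i k * Vt (WE (c k) z))^2
                = ∑ k : Fin M × Fin L, ∑ k' : Fin M × Fin L, (gam i k * gam i k')
                    * (if k' = k then ∑ x, p x * (Vt (WE x z) * Vt (WE x z))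
                      else (∑ x, p x * Vt (WE x z)) * (∑ x, p x * Vt (WE x z))) := by
              calc ∑ c, P c * (∑ k : Fin M × Fin L, gam i k * Vt (WE (c k) z))^2
                  = ∑ c, P c * ∑ k : Fin M × Fin L, ∑ k' : Fin M × Fin L,
                      (gam i k * gam i k') * (Vt (WE (c k) z) * Vt (WE (c k') z)) := by
                    apply Finset.sum_congr rfl
                    intro c _
                    rw [hexpand c]
                _ = ∑ k : Fin M × Fin L, ∑ c, P c * ∑ k' : Fin M × Fin L,
                      (gam i k * gam i k') * (Vt (WE (c k) z) * Vt (WE (c k') z)) :=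
                    exp_sum P _ _
                _ = ∑ k : Fin M × Fin L, ∑ k' : Fin M × Fin L, ∑ c, P c *
                      ((gam i k * gam i k') * (Vt (WE (c k) z) * Vt (WE (c k') z))) := by
                    apply Finset.sum_congr rfl
                    intro k _
                    exact exp_sum P _ _
                _ = ∑ k : Fin M × Fin L, ∑ k' : Fin M × Fin L, (gam i k * gam i k')
                    * (if k' = k then ∑ x, p x * (Vt (WE x z) * Vt (WE x z))
                      else (∑ x, p x * Vt (WE x z)) * (∑ x, p x * Vt (WE x z))) := by
                    apply Finset.sum_congr rfl
                    intro k _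
                    apply Finset.sum_congr rfl
                    intro k' _
                    rw [hpull, hEkk k k']
            rw [hstep]
            have hdiag : ∀ k : Fin M × Fin L,
                ∑ k' : Fin M × Fin L, (gam i k * gam i k')
                  * (if k' = k then ∑ x, p x * (Vt (WE x z) * Vt (WE x z))
                    else (∑ x, p x * Vt (WE x z)) * (∑ x, p x * Vt (WE x z)))
                = (gam i k * gam i k) * ((∑ x, p x * (Vt (WE x z) * Vt (WE x z)))
                    - (∑ x, p x * Vt (WE x z)) * (∑ x, p x * Vt (WE x z))) := by
              intro k
              have h1 : ∀ k' : Fin M × Fin L, (gam i k * gam i k')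
                  * (if k' = k then ∑ x, p x * (Vt (WE x z) * Vt (WE x z))
                    else (∑ x, p x * Vt (WE x z)) * (∑ x, p x * Vt (WE x z)))
                  = gam i k * (gam i k'
                  * (if k' = k then ∑ x, p x * (Vt (WE x z) * Vt (WE x z))
                    else (∑ x, p x * Vt (WE x z)) * (∑ x, p x * Vt (WE x z)))) :=
                fun k' => by ring
              rw [Finset.sum_congr rfl (fun k' _ => h1 k'), ← Finset.mul_sum]
              have h2 : ∑ k' : Fin M × Fin L, gam i k'
                  * (if k' = k then ∑ x, p x * (Vt (WE x z) * Vt (WE x z))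
                    else (∑ x, p x * Vt (WE x z)) * (∑ x, p x * Vt (WE x z)))
                  = gam i k * (∑ x, p x * (Vt (WE x z) * Vt (WE x z)))
                    - gam i k * ((∑ x, p x * Vt (WE x z)) * (∑ x, p x * Vt (WE x z))) := by
                rw [← Finset.add_sum_erase _ _ (mem_univ k), if_pos rfl]
                have h3 : ∀ k' ∈ univ.erase k, gam i k'
                    * (if k' = k then ∑ x, p x * (Vt (WE x z) * Vt (WE x z))
                      else (∑ x, p x * Vt (WE x z)) * (∑ x, p x * Vt (WE x z)))
                    = gam i k' * ((∑ x, p x * Vt (WE x z)) * (∑ x, p x * Vt (WE x z))) := by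
                  intro k' hk'
                  rw [if_neg (Finset.mem_erase.mp hk').1]
                rw [Finset.sum_congr rfl h3, ← Finset.sum_mul]
                have h4 : ∑ k' ∈ univ.erase k, gam i k' = - gam i k := by
                  have h5 := hgam_sum i
                  rw [← Finset.add_sum_erase _ _ (mem_univ k)] at h5
                  linarith
                rw [h4]
                ring
              rw [h2]
              ring
            calc ∑ k : Fin M × Fin L, ∑ k' : Fin M × Fin L, (gam i k * gam i k')
                  * (if k' = k then ∑ x, p x * (Vt (WE x z) * Vt (WE x z))
                    else (∑ x, p x * Vt (WE x z)) * (∑ x, p x * Vt (WE x z)))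
                = ∑ k : Fin M × Fin L, (gam i k * gam i k)
                    * ((∑ x, p x * (Vt (WE x z) * Vt (WE x z)))
                      - (∑ x, p x * Vt (WE x z)) * (∑ x, p x * Vt (WE x z))) :=
                  Finset.sum_congr rfl fun k _ => hdiag k
              _ ≤ ∑ k : Fin M × Fin L, (gam i k)^2
                    * (∑ x, p x * (Vt (WE x z) * Vt (WE x z))) := by
                  apply Finset.sum_le_sum
                  intro k _
                  rw [← sq]
                  apply mul_le_mul_of_nonneg_left _ (sq_nonneg _)
                  have := mul_self_nonneg (∑ x, p x * Vt (WE x z))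
                  linarith
              _ = (∑ k : Fin M × Fin L, (gam i k)^2)
                    * (∑ x, p x * (Vt (WE x z) * Vt (WE x z))) := by
                  rw [← Finset.sum_mul]
              _ ≤ ((L:ℝ))⁻¹ * (τ^(2 - 1/(1-t)) * m) := by
                  apply mul_le_mul (hgam_sq i) hv hv0 (by positivity)
          have habs1 : ∑ c, P c * |∑ k : Fin M × Fin L, gam i k * Vt (WE (c k) z)|
              ≤ Real.sqrt (((L:ℝ))⁻¹ * (τ^(2 - 1/(1-t)) * m)) := by
            calc ∑ c, P c * |∑ k : Fin M × Fin L, gam i k * Vt (WE (c k) z)|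
                ≤ Real.sqrt (∑ c, P c *
                    (∑ k : Fin M × Fin L, gam i k * Vt (WE (c k) z))^2) :=
                  exp_abs_le_sqrt P _ hP0 hP1
              _ ≤ Real.sqrt (((L:ℝ))⁻¹ * (τ^(2 - 1/(1-t)) * m)) :=
                  Real.sqrt_le_sqrt hvar
          have habs2 : ∑ c, P c * ∑ k : Fin M × Fin L, |gam i k| * Vh (WE (c k) z)
              ≤ 2 * (τ^(1 - 1/(1-t)) * m) := by
            have heh0 : 0 ≤ ∑ x, p x * Vh (WE x z) :=
              Finset.sum_nonneg fun x _ => mul_nonneg (hp0 x) (hVh0 _ (hWE0 x z))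
            calc ∑ c, P c * ∑ k : Fin M × Fin L, |gam i k| * Vh (WE (c k) z)
                = ∑ k : Fin M × Fin L, ∑ c, P c * (|gam i k| * Vh (WE (c k) z)) :=
                  exp_sum P _ _
              _ = ∑ k : Fin M × Fin L, |gam i k| * ∑ x, p x * Vh (WE x z) := by
                  apply Finset.sum_congr rfl
                  intro k _
                  rw [hpull, hPeval k (fun x => Vh (WE x z))]
              _ = (∑ k : Fin M × Fin L, |gam i k|) * ∑ x, p x * Vh (WE x z) := by
                  rw [← Finset.sum_mul]
              _ ≤ 2 * (τ^(1 - 1/(1-t)) * m) :=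
                  mul_le_mul (hgam_abs i) heh heh0 (by norm_num)
          calc ∑ c, P c * |∑ k : Fin M × Fin L, gam i k * WE (c k) z|
              ≤ ∑ c, P c * (|∑ k : Fin M × Fin L, gam i k * Vt (WE (c k) z)|
                  + ∑ k : Fin M × Fin L, |gam i k| * Vh (WE (c k) z)) := by
                apply Finset.sum_le_sum
                intro c _
                apply mul_le_mul_of_nonneg_left _ (hP0 c)
                rw [hTsplit c]
                apply le_trans (abs_add_le _ _)
                apply add_le_add le_rfl
                calc |∑ k : Fin M × Fin L, gam i k * Vh (WE (c k) z)|
                    ≤ ∑ k : Fin M × Fin L, |gam i k * Vh (WE (c k) z)| :=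
                      Finset.abs_sum_le_sum_abs _ _
                  _ = ∑ k : Fin M × Fin L, |gam i k| * Vh (WE (c k) z) := by
                      apply Finset.sum_congr rfl
                      intro k _
                      rw [abs_mul, abs_of_nonneg (hVh0 _ (hWE0 _ _))]
            _ = (∑ c, P c * |∑ k : Fin M × Fin L, gam i k * Vt (WE (c k) z)|)
                + ∑ c, P c * ∑ k : Fin M × Fin L, |gam i k| * Vh (WE (c k) z) := by
                rw [← Finset.sum_add_distrib]
                apply Finset.sum_congr rfl
                intro c _
                ring
            _ ≤ Real.sqrt (((L:ℝ))⁻¹ * (τ^(2 - 1/(1-t)) * m))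
                + 2 * (τ^(1 - 1/(1-t)) * m) := add_le_add habs1 habs2
            _ ≤ 3 * (m^(1-t) * (((L:ℝ))^t)⁻¹) := by
                rw [hτdef]
                exact eve_algebra hm hL1 ht0' ht2

      -- sum up the per-(i,z) bounds
      calc ∑ c, P c * d1 c
          = (1/(M:ℝ)) * ∑ i : Fin M, ∑ z, ∑ c, P c *
              |∑ k : Fin M × Fin L, gam i k * WE (c k) z| := by
            rw [Finset.sum_congr rfl (fun c (_ : c ∈ univ) =>
              congrArg (P c * ·) (hd1form c))]
            exact exp_sum2 P (1/(M:ℝ)) _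
        _ ≤ (1/(M:ℝ)) * ∑ i : Fin M, ∑ z,
              3 * ((∑ x, p x * WE x z ^ (1/(1-t)))^(1-t) * (((L:ℝ))^t)⁻¹) := by
            apply mul_le_mul_of_nonneg_left _ (by positivity)
            apply Finset.sum_le_sum
            intro i _
            apply Finset.sum_le_sum
            intro z _
            exact hEiz i z
        _ = 3 * fE t := by
            rw [Finset.sum_const, Finset.card_univ, Fintype.card_fin, nsmul_eq_mul]
            rw [← mul_assoc]
            have hMne0 : (M:ℝ) ≠ 0 := ne_of_gt hMpos
            rw [show (1/(M:ℝ)) * (M:ℝ) = 1 by field_simp, one_mul]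
            have hfEt : fE t = (∑ z, (∑ x, p x * WE x z ^ (1/(1-t)))^(1-t)) * (((L:ℝ))^t)⁻¹ := by
              rw [hfE]
              exact div_eq_mul_inv _ _
            rw [hfEt, ← Finset.mul_sum, ← Finset.sum_mul]


  -- positivity of the two infima
  obtain ⟨x₀, hx₀⟩ : ∃ x, 0 < p x := by
    by_contra hno
    push_neg at hno
    have : ∑ x, p x ≤ 0 := Finset.sum_nonpos fun x _ => hno x
    rw [hp1] at this; linarith
  have hpx1 : p x₀ ≤ 1 := by
    rw [← hp1]
    exact Finset.single_le_sum (fun x _ => hp0 x) (mem_univ x₀)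
  obtain ⟨y₀, hy₀⟩ : ∃ y, 0 < WB x₀ y := by
    by_contra hno
    push_neg at hno
    have : ∑ y, WB x₀ y ≤ 0 := Finset.sum_nonpos fun y _ => hno y
    rw [hWB1 x₀] at this; linarith
  obtain ⟨z₀, hz₀⟩ : ∃ z, 0 < WE x₀ z := by
    by_contra hno
    push_neg at hno
    have : ∑ z, WE x₀ z ≤ 0 := Finset.sum_nonpos fun z _ => hno z
    rw [hWE1 x₀] at this; linarith
  have hBlb : ∀ t ∈ Set.Icc (0:ℝ) 1, p x₀ ^ (2:ℝ) * WB x₀ y₀ ≤ fB t := by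
    intro t ht
    obtain ⟨ht0, ht1⟩ := ht
    have h1t : (0:ℝ) < 1 + t := by linarith
    have hSnn : 0 ≤ ∑ y, (∑ x, p x * WB x y ^ (1/(1+t)))^(1+t) :=
      Finset.sum_nonneg fun y _ => Real.rpow_nonneg (Finset.sum_nonneg fun x _ =>
        mul_nonneg (hp0 x) (Real.rpow_nonneg (hWB0 x y) _)) _
    have hbase : p x₀ ^ (2:ℝ) * WB x₀ y₀ ≤ (∑ x, p x * WB x y₀ ^ (1/(1+t))) ^ (1+t) := by
      have hsingle : p x₀ * WB x₀ y₀ ^ (1/(1+t)) ≤ ∑ x, p x * WB x y₀ ^ (1/(1+t)) :=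
        Finset.single_le_sum (fun x _ => mul_nonneg (hp0 x)
          (Real.rpow_nonneg (hWB0 x y₀) _)) (mem_univ x₀)
      calc p x₀ ^ (2:ℝ) * WB x₀ y₀ ≤ p x₀ ^ (1+t) * WB x₀ y₀ := by
            apply mul_le_mul_of_nonneg_right _ (hWB0 _ _)
            exact Real.rpow_le_rpow_of_exponent_ge hx₀ hpx1 (by linarith)
        _ = (p x₀ * WB x₀ y₀ ^ (1/(1+t))) ^ (1+t) := by
            rw [Real.mul_rpow (hp0 x₀) (Real.rpow_nonneg (hWB0 _ _) _),
              ← Real.rpow_mul (hWB0 _ _)]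
            rw [show 1/(1+t) * (1+t) = 1 by field_simp, Real.rpow_one]
        _ ≤ (∑ x, p x * WB x y₀ ^ (1/(1+t))) ^ (1+t) :=
            Real.rpow_le_rpow (mul_nonneg (hp0 x₀)
              (Real.rpow_nonneg (hWB0 _ _) _)) hsingle (by linarith)
    have hy0sum : (∑ x, p x * WB x y₀ ^ (1/(1+t))) ^ (1+t)
        ≤ ∑ y, (∑ x, p x * WB x y ^ (1/(1+t)))^(1+t) :=
      Finset.single_le_sum (fun y _ => Real.rpow_nonneg (Finset.sum_nonneg fun x _ =>
        mul_nonneg (hp0 x) (Real.rpow_nonneg (hWB0 x y) _)) _) (mem_univ y₀)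
    have hone : (1:ℝ) ≤ ((M:ℝ)*L)^t := by
      rw [← Real.rpow_zero ((M:ℝ)*L)]
      exact Real.rpow_le_rpow_of_exponent_le hML1 ht0
    calc p x₀ ^ (2:ℝ) * WB x₀ y₀
        ≤ ∑ y, (∑ x, p x * WB x y ^ (1/(1+t)))^(1+t) := le_trans hbase hy0sum
      _ ≤ ((M:ℝ)*L)^t * ∑ y, (∑ x, p x * WB x y ^ (1/(1+t)))^(1+t) :=
          le_mul_of_one_le_left hSnn hone
      _ = fB t := by rw [hfB]
  have hElb : ∀ t ∈ Set.Icc (0:ℝ) (1/2:ℝ),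
      p x₀ * WE x₀ z₀ / (L:ℝ)^(1/2:ℝ) ≤ fE t := by
    intro t ht
    obtain ⟨ht0, ht2⟩ := ht
    have h1t : (0:ℝ) < 1 - t := by linarith
    have hL0 : (0:ℝ) < (L:ℝ) := by linarith
    have hsingle : p x₀ * WE x₀ z₀ ≤ ∑ z, (∑ x, p x * WE x z ^ (1/(1-t)))^(1-t) := by
      calc p x₀ * WE x₀ z₀ ≤ p x₀ ^ (1-t) * WE x₀ z₀ := by
            apply mul_le_mul_of_nonneg_right _ (hWE0 _ _)
            calc p x₀ = p x₀ ^ (1:ℝ) := (Real.rpow_one _).symm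
              _ ≤ p x₀ ^ (1-t) := Real.rpow_le_rpow_of_exponent_ge hx₀ hpx1 (by linarith)
        _ = (p x₀ * WE x₀ z₀ ^ (1/(1-t)))^(1-t) := by
            rw [Real.mul_rpow (hp0 x₀) (Real.rpow_nonneg (hWE0 _ _) _),
              ← Real.rpow_mul (hWE0 _ _)]
            rw [show 1/(1-t) * (1-t) = 1 by field_simp, Real.rpow_one]
        _ ≤ (∑ x, p x * WE x z₀ ^ (1/(1-t)))^(1-t) :=
            Real.rpow_le_rpow (mul_nonneg (hp0 x₀) (Real.rpow_nonneg (hWE0 _ _) _))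
              (Finset.single_le_sum (fun x _ => mul_nonneg (hp0 x)
                (Real.rpow_nonneg (hWE0 x z₀) _)) (mem_univ x₀)) (by linarith)
        _ ≤ ∑ z, (∑ x, p x * WE x z ^ (1/(1-t)))^(1-t) :=
            Finset.single_le_sum (fun z _ => Real.rpow_nonneg (Finset.sum_nonneg fun x _ =>
              mul_nonneg (hp0 x) (Real.rpow_nonneg (hWE0 x z) _)) _) (mem_univ z₀)
    have hLt : (L:ℝ)^t ≤ (L:ℝ)^(1/2:ℝ) := Real.rpow_le_rpow_of_exponent_le hL1 ht2
    rw [hfE]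
    exact div_le_div₀ (le_trans (by positivity) hsingle) hsingle
      (Real.rpow_pos_of_pos hL0 t) hLt
  set B := sInf (fB '' Set.Icc 0 1) with hB
  set E := sInf (fE '' Set.Icc 0 (1/2)) with hE
  have hBne : (fB '' Set.Icc 0 1).Nonempty := ⟨fB 0, ⟨0, by norm_num, rfl⟩⟩
  have hEne : (fE '' Set.Icc 0 (1/2)).Nonempty := ⟨fE 0, ⟨0, by norm_num, rfl⟩⟩
  have hBpos : 0 < B := by
    have hpos : 0 < p x₀ ^ (2:ℝ) * WB x₀ y₀ := mul_pos (Real.rpow_pos_of_pos hx₀ _) hy₀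
    refine lt_of_lt_of_le hpos (le_csInf hBne ?_)
    rintro b ⟨t, ht, rfl⟩
    exact hBlb t ht
  have hEpos : 0 < E := by
    have h12 : (0:ℝ) < (L:ℝ)^(1/2:ℝ) := Real.rpow_pos_of_pos (by linarith) _
    have hpos : 0 < p x₀ * WE x₀ z₀ / (L:ℝ)^(1/2:ℝ) := by positivity
    refine lt_of_lt_of_le hpos (le_csInf hEne ?_)
    rintro b ⟨t, ht, rfl⟩
    exact hElb t ht
  have hEeps : ∑ c, P c * eps c ≤ B := by
    apply le_csInf hBne
    rintro b ⟨t, ht, rfl⟩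
    exact hBob t ht
  have hEd1 : ∑ c, P c * d1 c ≤ 3 * E := by
    have h3 : (∑ c, P c * d1 c)/3 ≤ E := by
      apply le_csInf hEne
      rintro b ⟨t, ht, rfl⟩
      rw [div_le_iff₀ (by norm_num : (0:ℝ) < 3)]
      calc ∑ c, P c * d1 c ≤ 3 * fE t := hEve t ht
        _ = fE t * 3 := by ring
    linarith
  have heps0 : ∀ c, 0 ≤ eps c := by
    intro c
    rw [heps]
    apply mul_nonneg (by positivity)
    apply Finset.sum_nonneg; intro i _
    apply Finset.sum_nonneg; intro x _
    exact mul_nonneg (hQ0 c i x) (Finset.sum_nonneg fun y _ => hWB0 x y)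
  have hd10 : ∀ c, 0 ≤ d1 c := by
    intro c
    rw [hd1]
    apply Finset.sum_nonneg; intro i _
    exact Finset.sum_nonneg fun z _ => abs_nonneg _
  obtain ⟨c, hc⟩ := exists_le_expectation P (fun c => 3*E*eps c + B*d1 c) hP0 hP1
  have hexp : ∑ c', P c' * (3*E*eps c' + B*d1 c') ≤ 6*(B*E) := by
    have hsplit : ∑ c', P c' * (3*E*eps c' + B*d1 c')
        = 3*E*(∑ c', P c'*eps c') + B*(∑ c', P c'*d1 c') := by
      rw [Finset.mul_sum, Finset.mul_sum, ← Finset.sum_add_distrib]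
      apply Finset.sum_congr rfl
      intro c' _
      ring
    rw [hsplit]
    have h1 : 3*E*(∑ c', P c'*eps c') ≤ 3*E*B :=
      mul_le_mul_of_nonneg_left hEeps (by positivity)
    have h2 : B*(∑ c', P c'*d1 c') ≤ B*(3*E) :=
      mul_le_mul_of_nonneg_left hEd1 (le_of_lt hBpos)
    nlinarith
  have hc' : 3*E*eps c + B*d1 c ≤ ∑ c', P c' * (3*E*eps c' + B*d1 c') := hc
  have hcc : 3*E*eps c + B*d1 c ≤ 6*(B*E) := le_trans hc' hexp
  have hepsB : eps c ≤ 2*B := by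
    have h2 : (3*E) * eps c ≤ (3*E) * (2*B) := by
      have he : (3*E)*(2*B) = 6*(B*E) := by ring
      rw [he]
      have h1 : 0 ≤ B * d1 c := mul_nonneg hBpos.le (hd10 c)
      linarith
    exact le_of_mul_le_mul_left h2 (by positivity)
  have hd1E : d1 c ≤ 6*E := by
    have h2 : B * d1 c ≤ B * (6*E) := by
      have he : B*(6*E) = 6*(B*E) := by ring
      rw [he]
      have h1 : 0 ≤ 3*E*eps c := mul_nonneg (by positivity) (heps0 c)
      linarith
    exact le_of_mul_le_mul_left h2 hBpos
  refine ⟨Qc c, Dc c, fun i x => hQ0 c i x, fun i => hQ1 c i, ?_, ?_, ?_⟩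
  · -- disjointness
    intro i j hij
    rw [hDc]
    simp only [Finset.disjoint_filter_filter']
    rw [Finset.disjoint_left]
    intro y hy1 hy2
    simp only [Finset.mem_filter] at hy1 hy2
    exact hij (hy1.2 ▸ hy2.2 ▸ rfl)
  · calc (1 / (M : ℝ)) * ∑ i, ∑ x, Qc c i x * ∑ y ∈ (Dc c i)ᶜ, WB x y
        = eps c := by rw [heps]
      _ ≤ 2*B := hepsB
      _ = 2 * sInf (fB '' Set.Icc 0 1) := by rw [hB]
  · calc (∑ i : Fin M, ∑ z,
          |(1 / (M : ℝ)) * (∑ x, Qc c i x * WE x z)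
            - (1 / (M : ℝ)) * ((1 / (M : ℝ)) * ∑ j, ∑ x, Qc c j x * WE x z)|)
        = d1 c := by rw [hd1]
      _ ≤ 6*E := hd1E
      _ = 6 * sInf (fE '' Set.Icc 0 (1/2)) := by rw [hE]
end

section
/- Let X, Y be finite sets, W: X → (probability distributions on Y) a channel, and p a probability distribution on X such that W_p(y) > 0 for every y ∈ Y, where W_p(y) := Σ_x p(x) W_x(y). Then for every t with 0 ≤ t < 1, e^{(1−t)ψ(t/(1−t)|W,p)} ≥ e^{φ(t|W,p)}; that is, ( Σ_y [ Σ_x p(x) W_x(y)^{1/(1−t)} ] W_p(y)^{−t/(1−t)} )^{1−t} ≥ Σ_y ( Σ_x p(x) W_x(y)^{1/(1−t)} )^{1−t}. Consequently the exponent bound e_φ(R|W,p) := max_{0≤t≤1/2} (tR − φ(t|W,p)) is at least e_ψ(R|W,p) := max_{0≤t≤1/2} (tR − (1−t)ψ(t/(1−t)|W,p)) for every R. -/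
open Finset

/-- **Comparison of exponents via reverse Hölder.** For a channel `W` and an input
distribution `p` with `W_p(y) > 0` everywhere, for every `t ∈ [0,1)` one has
`e^{(1-t)ψ(t/(1-t)|W,p)} ≥ e^{φ(t|W,p)}`; consequently, for every `R`, the exponent bound
`e_φ(R|W,p) = max_{0≤t≤1/2} (tR - φ(t|W,p))` is at least
`e_ψ(R|W,p) = max_{0≤t≤1/2} (tR - (1-t)ψ(t/(1-t)|W,p))`. -/
theorem stmt_18 {X Y : Type*} [Fintype X] [Fintype Y]
    (W : X → Y → ℝ) (hW0 : ∀ x y, 0 ≤ W x y) (hW1 : ∀ x, ∑ y, W x y = 1)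
    (p : X → ℝ) (hp0 : ∀ x, 0 ≤ p x) (hp1 : ∑ x, p x = 1)
    (hWp : ∀ y, 0 < ∑ x, p x * W x y) :
    (∀ t : ℝ, 0 ≤ t → t < 1 →
      ∑ y, (∑ x, p x * W x y ^ (1 / (1 - t))) ^ (1 - t)
        ≤ (∑ y, (∑ x, p x * W x y ^ (1 / (1 - t)))
            * (∑ x, p x * W x y) ^ (-(t / (1 - t)))) ^ (1 - t))
    ∧
    (∀ R : ℝ,
      sSup ((fun t : ℝ => t * R - (1 - t) * Real.log
          (∑ y, (∑ x, p x * W x y ^ (1 + t / (1 - t)))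
            * (∑ x', p x' * W x' y) ^ (-(t / (1 - t))))) '' Set.Icc 0 (1 / 2))
        ≤ sSup ((fun t : ℝ => t * R - Real.log
            (∑ y, (∑ x, p x * W x y ^ (1 / (1 - t))) ^ (1 - t))) ''
            Set.Icc 0 (1 / 2))) := by
  -- basic facts
  have hXne : Nonempty X := by
    by_contra h
    rw [not_nonempty_iff] at h
    rw [Finset.univ_eq_empty, Finset.sum_empty] at hp1
    norm_num at hp1
  have hYne : Nonempty Y := by
    by_contra h
    rw [not_nonempty_iff] at h
    have := hW1 (Classical.arbitrary X)
    rw [Finset.univ_eq_empty, Finset.sum_empty] at this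
    norm_num at this
  have hWle1 : ∀ x y, W x y ≤ 1 := by
    intro x y
    calc W x y ≤ ∑ y', W x y' :=
          Finset.single_le_sum (fun y' _ => hW0 x y') (Finset.mem_univ y)
      _ = 1 := hW1 x
  have hex : ∀ y : Y, ∃ x, 0 < p x ∧ 0 < W x y := by
    intro y
    by_contra h
    push_neg at h
    have : ∑ x, p x * W x y ≤ 0 := by
      apply Finset.sum_nonpos
      intro x _
      rcases le_or_gt (p x) 0 with hpx | hpx
      · have hpx0 : p x = 0 := le_antisymm hpx (hp0 x)
        simp [hpx0]
      · exact mul_nonpos_of_nonneg_of_nonpos (hp0 x) (h x hpx)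
    linarith [hWp y]
  -- positivity of the inner sums for any exponent
  have hA : ∀ (e : ℝ) (y : Y), 0 < ∑ x, p x * W x y ^ e := by
    intro e y
    obtain ⟨x, hpx, hWx⟩ := hex y
    apply Finset.sum_pos'
    · intro x' _
      exact mul_nonneg (hp0 x') (Real.rpow_nonneg (hW0 x' y) e)
    · exact ⟨x, Finset.mem_univ x, mul_pos hpx (Real.rpow_pos_of_pos hWx e)⟩
  have hAle1 : ∀ (e : ℝ), 0 ≤ e → ∀ y : Y, ∑ x, p x * W x y ^ e ≤ 1 := by
    intro e he y
    calc ∑ x, p x * W x y ^ e ≤ ∑ x, p x * 1 := by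
          apply Finset.sum_le_sum
          intro x _
          exact mul_le_mul_of_nonneg_left (Real.rpow_le_one (hW0 x y) (hWle1 x y) he) (hp0 x)
      _ = 1 := by simp [hp1]
  -- the key inequality
  have key : ∀ t : ℝ, 0 ≤ t → t < 1 →
      ∑ y, (∑ x, p x * W x y ^ (1 / (1 - t))) ^ (1 - t)
        ≤ (∑ y, (∑ x, p x * W x y ^ (1 / (1 - t)))
            * (∑ x, p x * W x y) ^ (-(t / (1 - t)))) ^ (1 - t) := by
    intro t ht0 ht1
    have h1t : (0:ℝ) < 1 - t := by linarith
    set r : ℝ := 1 / (1 - t) with hrdef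
    have hr1 : 1 ≤ r := by
      rw [hrdef, le_div_iff₀ h1t]; linarith
    set a : Y → ℝ := fun y => ∑ x, p x * W x y ^ r with hadef
    set q : Y → ℝ := fun y => ∑ x, p x * W x y with hqdef
    have hapos : ∀ y, 0 < a y := fun y => hA r y
    have hqpos : ∀ y, 0 < q y := hWp
    have hqsum : ∑ y, q y = 1 := by
      simp only [hqdef]
      rw [Finset.sum_comm]
      simp_rw [← Finset.mul_sum, hW1, mul_one]
      exact hp1
    set z : Y → ℝ := fun y => a y * q y ^ (-r) with hzdef
    have hzpos : ∀ y, 0 < z y := fun y =>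
      mul_pos (hapos y) (Real.rpow_pos_of_pos (hqpos y) _)
    have hrw1 : ∀ y : Y, a y ^ (1 - t) = q y * z y ^ (1 - t) := by
      intro y
      have h1 : (-r) * (1 - t) = -1 := by
        rw [hrdef]; field_simp
      calc a y ^ (1 - t)
          = q y * (a y ^ (1 - t) * (q y)⁻¹) := by
            rw [mul_comm, mul_assoc, inv_mul_cancel₀ (hqpos y).ne', mul_one]
        _ = q y * (a y ^ (1 - t) * (q y ^ (-r)) ^ (1 - t)) := by
            rw [← Real.rpow_mul (hqpos y).le, h1, Real.rpow_neg_one]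
        _ = q y * z y ^ (1 - t) := by
            rw [hzdef,
              Real.mul_rpow (hapos y).le (Real.rpow_nonneg (hqpos y).le _)]
    have hqz : ∀ y : Y, q y * z y = a y * q y ^ (-(t / (1 - t))) := by
      intro y
      have h2 : (1:ℝ) + (-r) = -(t / (1 - t)) := by
        rw [hrdef]; field_simp; ring
      calc q y * z y = a y * (q y ^ (1:ℝ) * q y ^ (-r)) := by
            rw [hzdef, Real.rpow_one]; ring
        _ = a y * q y ^ ((1:ℝ) + (-r)) := by
            rw [← Real.rpow_add (hqpos y)]
        _ = a y * q y ^ (-(t / (1 - t))) := by rw [h2]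
    set S : ℝ := ∑ y, q y * z y ^ (1 - t) with hS
    have hS0 : 0 ≤ S :=
      Finset.sum_nonneg fun y _ =>
        mul_nonneg (hqpos y).le (Real.rpow_nonneg (hzpos y).le _)
    have hr1t : r * (1 - t) = 1 := by
      rw [hrdef]; field_simp
    have hSr : S = (S ^ r) ^ (1 - t) := by
      calc S = S ^ (1:ℝ) := (Real.rpow_one S).symm
        _ = S ^ (r * (1 - t)) := by rw [hr1t]
        _ = (S ^ r) ^ (1 - t) := Real.rpow_mul hS0 _ _
    have jensen : S ^ r ≤ ∑ y, a y * q y ^ (-(t / (1 - t))) := by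
      calc S ^ r ≤ ∑ y, q y * (z y ^ (1 - t)) ^ r :=
            Real.rpow_arith_mean_le_arith_mean_rpow Finset.univ q
              (fun y => z y ^ (1 - t)) (fun y _ => (hqpos y).le) hqsum
              (fun y _ => Real.rpow_nonneg (hzpos y).le _) hr1
        _ = ∑ y, q y * z y := by
            apply Finset.sum_congr rfl
            intro y _
            congr 1
            rw [← Real.rpow_mul (hzpos y).le]
            rw [mul_comm (1 - t) r, hr1t, Real.rpow_one]
        _ = ∑ y, a y * q y ^ (-(t / (1 - t))) :=
            Finset.sum_congr rfl fun y _ => hqz y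
    calc ∑ y, a y ^ (1 - t) = S := Finset.sum_congr rfl fun y _ => hrw1 y
      _ = (S ^ r) ^ (1 - t) := hSr
      _ ≤ (∑ y, a y * q y ^ (-(t / (1 - t)))) ^ (1 - t) :=
          Real.rpow_le_rpow (Real.rpow_nonneg hS0 r) jensen h1t.le
  refine ⟨key, ?_⟩
  intro R
  -- a uniform positive lower bound on the φ-sums
  set c : ℝ := ∑ y, ∑ x, p x * W x y ^ (2:ℝ) with hc
  have hcpos : 0 < c :=
    Finset.sum_pos (fun y _ => hA 2 y) Finset.univ_nonempty
  have hφpos : ∀ t : ℝ, 0 < 1 - t →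
      0 < ∑ y, (∑ x, p x * W x y ^ (1 / (1 - t))) ^ (1 - t) := by
    intro t h1t
    exact Finset.sum_pos
      (fun y _ => Real.rpow_pos_of_pos (hA _ y) _) Finset.univ_nonempty
  have hφc : ∀ t ∈ Set.Icc (0:ℝ) (1/2),
      c ≤ ∑ y, (∑ x, p x * W x y ^ (1 / (1 - t))) ^ (1 - t) := by
    rintro t ⟨ht0, ht12⟩
    have h1t : (0:ℝ) < 1 - t := by linarith
    have hrle2 : 1 / (1 - t) ≤ 2 := by
      rw [div_le_iff₀ h1t]; linarith
    have hr0 : (0:ℝ) < 1 / (1 - t) := by positivity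
    apply Finset.sum_le_sum
    intro y _
    have h1 : ∑ x, p x * W x y ^ (2:ℝ) ≤ ∑ x, p x * W x y ^ (1 / (1 - t)) := by
      apply Finset.sum_le_sum
      intro x _
      apply mul_le_mul_of_nonneg_left _ (hp0 x)
      rcases eq_or_lt_of_le (hW0 x y) with h | h
      · rw [← h, Real.zero_rpow (by norm_num : (2:ℝ) ≠ 0),
          Real.zero_rpow hr0.ne']
      · exact Real.rpow_le_rpow_of_exponent_ge h (hWle1 x y) hrle2
    have h2 : ∑ x, p x * W x y ^ (1 / (1 - t))
        ≤ (∑ x, p x * W x y ^ (1 / (1 - t))) ^ (1 - t) := by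
      have h3 := Real.rpow_le_rpow_of_exponent_ge (hA (1 / (1 - t)) y)
        (hAle1 _ hr0.le y) (show 1 - t ≤ 1 by linarith)
      rwa [Real.rpow_one] at h3
    linarith
  have hbdd : BddAbove ((fun t : ℝ => t * R - Real.log
      (∑ y, (∑ x, p x * W x y ^ (1 / (1 - t))) ^ (1 - t))) ''
      Set.Icc 0 (1 / 2)) := by
    refine ⟨|R| - Real.log c, ?_⟩
    rintro v ⟨t, ht, rfl⟩
    have hlog : Real.log c ≤ Real.log
        (∑ y, (∑ x, p x * W x y ^ (1 / (1 - t))) ^ (1 - t)) :=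
      Real.log_le_log hcpos (hφc t ht)
    have htR : t * R ≤ |R| := by
      calc t * R ≤ t * |R| := mul_le_mul_of_nonneg_left (le_abs_self R) ht.1
        _ ≤ 1 * |R| := mul_le_mul_of_nonneg_right (by linarith [ht.2]) (abs_nonneg R)
        _ = |R| := one_mul _
    simp only
    linarith
  have hne : ((fun t : ℝ => t * R - (1 - t) * Real.log
      (∑ y, (∑ x, p x * W x y ^ (1 + t / (1 - t)))
        * (∑ x', p x' * W x' y) ^ (-(t / (1 - t))))) '' Set.Icc 0 (1 / 2)).Nonempty :=
    Set.Nonempty.image _ (Set.nonempty_Icc.2 (by norm_num))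
  apply csSup_le hne
  rintro v ⟨t, ht, rfl⟩
  obtain ⟨ht0, ht12⟩ := ht
  have h1t : (0:ℝ) < 1 - t := by linarith
  have hexp : 1 + t / (1 - t) = 1 / (1 - t) := by
    field_simp
    ring
  have hB : 0 < ∑ y, (∑ x, p x * W x y ^ (1 + t / (1 - t)))
      * (∑ x', p x' * W x' y) ^ (-(t / (1 - t))) :=
    Finset.sum_pos (fun y _ => mul_pos (hA _ y)
      (Real.rpow_pos_of_pos (hWp y) _)) Finset.univ_nonempty
  have hle : t * R - (1 - t) * Real.log
      (∑ y, (∑ x, p x * W x y ^ (1 + t / (1 - t)))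
        * (∑ x', p x' * W x' y) ^ (-(t / (1 - t))))
      ≤ t * R - Real.log
      (∑ y, (∑ x, p x * W x y ^ (1 / (1 - t))) ^ (1 - t)) := by
    have hkey := key t ht0 (by linarith)
    rw [hexp] at hB ⊢
    have hlog1 : Real.log (∑ y, (∑ x, p x * W x y ^ (1 / (1 - t))) ^ (1 - t))
        ≤ Real.log ((∑ y, (∑ x, p x * W x y ^ (1 / (1 - t)))
            * (∑ x, p x * W x y) ^ (-(t / (1 - t)))) ^ (1 - t)) :=
      Real.log_le_log (hφpos t h1t) hkey
    rw [Real.log_rpow] at hlog1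
    · linarith [hlog1]
    · exact hB
  refine le_trans hle (le_csSup hbdd ⟨t, ⟨ht0, ht12⟩, rfl⟩)
end

section
/- Let X be a finite abelian group, P a probability distribution on X, and define the additive channel W by W_x(z) := P(z − x) for x, z ∈ X. Let p_mix be the uniform distribution on X. Then for every t with 0 ≤ t < 1: e^{φ(t|W,p_mix)} = e^{(1−t)ψ(t/(1−t)|W,p_mix)} = |X|^t · ( Σ_{x∈X} P(x)^{1/(1−t)} )^{1−t} = |X|^t e^{−(1−t) H̃_{1/(1−t)}(X|P)}. -/
open Finset

/-- For an additive channel `W_x(z) = P(z - x)` on a finite abelian group `X` with uniform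
input distribution, for every `t ∈ [0,1)`:
`e^{φ(t|W,p_mix)} = e^{(1-t)ψ(t/(1-t)|W,p_mix)} = |X|^t (∑_x P(x)^{1/(1-t)})^{1-t}
 = |X|^t e^{-(1-t)H̃_{1/(1-t)}(X|P)}`. -/
theorem stmt_19 {X : Type*} [Fintype X] [AddCommGroup X]
    (P : X → ℝ) (hP0 : ∀ x, 0 ≤ P x) (hP1 : ∑ x, P x = 1)
    (t : ℝ) (ht0 : 0 ≤ t) (ht1 : t < 1) :
    (∑ z, (∑ x, (1 / (Fintype.card X : ℝ)) * P (z - x) ^ (1 / (1 - t))) ^ (1 - t)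
      = (∑ z, (∑ x, (1 / (Fintype.card X : ℝ)) * P (z - x) ^ (1 + t / (1 - t)))
          * (∑ x, (1 / (Fintype.card X : ℝ)) * P (z - x)) ^ (-(t / (1 - t)))) ^ (1 - t))
    ∧
    ((∑ z, (∑ x, (1 / (Fintype.card X : ℝ)) * P (z - x) ^ (1 + t / (1 - t)))
        * (∑ x, (1 / (Fintype.card X : ℝ)) * P (z - x)) ^ (-(t / (1 - t)))) ^ (1 - t)
      = (Fintype.card X : ℝ) ^ t * (∑ x, P x ^ (1 / (1 - t))) ^ (1 - t)) := by
  have ht : (1 : ℝ) - t ≠ 0 := by linarith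
  have ht' : (0:ℝ) < 1 - t := by linarith
  set N : ℝ := (Fintype.card X : ℝ) with hNdef
  have hcard : (0:ℕ) < Fintype.card X := by
    by_contra h
    have : Fintype.card X = 0 := by omega
    have : IsEmpty X := Fintype.card_eq_zero_iff.mp this
    simp [Finset.univ_eq_empty] at hP1
  have hNpos : 0 < N := by rw [hNdef]; exact_mod_cast hcard
  have hexp : 1 + t / (1 - t) = 1 / (1 - t) := by field_simp; ring
  set S : ℝ := ∑ x, P x ^ (1 / (1 - t)) with hSdef
  have hS0 : 0 ≤ S := Finset.sum_nonneg fun x _ => Real.rpow_nonneg (hP0 x) _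
  have hshift : ∀ (a : ℝ) (z : X), ∑ x, P (z - x) ^ a = ∑ x, P x ^ a := by
    intro a z
    exact Fintype.sum_equiv (Equiv.subLeft z) _ _ (fun x => rfl)
  have hshift1 : ∀ z : X, ∑ x, P (z - x) = 1 := by
    intro z
    exact (Fintype.sum_equiv (Equiv.subLeft z) _ P fun x => rfl).trans hP1
  have hin1 : ∀ z : X, ∑ x, (1 / N) * P (z - x) ^ (1 / (1 - t)) = (1 / N) * S := by
    intro z
    rw [← Finset.mul_sum, hshift]
  have hin2 : ∀ z : X, ∑ x, (1 / N) * P (z - x) = 1 / N := by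
    intro z
    rw [← Finset.mul_sum, hshift1, mul_one]
  -- value of the middle sum
  have hmid : (∑ z : X, (∑ x, (1 / N) * P (z - x) ^ (1 + t / (1 - t)))
        * (∑ x, (1 / N) * P (z - x)) ^ (-(t / (1 - t))))
      = S * N ^ (t / (1 - t)) := by
    have : ∀ z : X, (∑ x, (1 / N) * P (z - x) ^ (1 + t / (1 - t)))
        * (∑ x, (1 / N) * P (z - x)) ^ (-(t / (1 - t)))
        = (1 / N) * S * (1 / N) ^ (-(t / (1 - t))) := by
      intro z
      rw [hin2, hexp, ← Finset.mul_sum, hshift]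
    rw [Finset.sum_congr rfl (fun z _ => this z), Finset.sum_const, Finset.card_univ,
      nsmul_eq_mul, one_div, Real.inv_rpow hNpos.le, Real.rpow_neg hNpos.le, inv_inv]
    field_simp
    rw [hNdef]
  have hleft : (∑ z : X, (∑ x, (1 / N) * P (z - x) ^ (1 / (1 - t))) ^ (1 - t))
      = N ^ t * S ^ (1 - t) := by
    rw [Finset.sum_congr rfl (fun z _ => by rw [hin1 z]), Finset.sum_const, Finset.card_univ,
      nsmul_eq_mul]
    rw [Real.mul_rpow (by positivity) hS0, one_div, Real.inv_rpow hNpos.le,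
      ← Real.rpow_neg hNpos.le, ← hNdef, ← mul_assoc,
      show N * N ^ (-(1 - t)) = N ^ t by
        nth_rewrite 1 [← Real.rpow_one N]
        rw [← Real.rpow_add hNpos]; norm_num]
  have hright : (S * N ^ (t / (1 - t))) ^ (1 - t) = N ^ t * S ^ (1 - t) := by
    rw [Real.mul_rpow hS0 (Real.rpow_nonneg hNpos.le _), ← Real.rpow_mul hNpos.le]
    rw [show t / (1 - t) * (1 - t) = t by field_simp]
    ring
  constructor
  · rw [hleft, hmid, hright]
  · rw [hmid, hright]
end
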